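/- arXiv:2201.10229 — 2 statements merged into one kernel-verified Lean document; each statement's English description precedes it below -/
import Mathlib

section
/- Let p be an odd prime and d ≥ 2. Then the number ν(d−1,d) of (d−1)-dimensional subspaces U of the d-dimensional hermitian space V over 𝔽_{p²} with U^⊥ ⊆ U satisfies ν(d−1,d) · (p² − 1) = (p^{d−1} − (−1)^{d−1}) · (p^d − (−1)^d). -/
/-!
Hermitian spaces over the finite field `𝔽_{p²}`: counting subspaces containing
their orthogonal.
-/

noncomputable section

/-- The field with `p²` elements. -/
abbrev Fq (p : ℕ) [Fact p.Prime] : Type := GaloisField p 2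

/-- The hermitian form on `V = (𝔽_{p²})^d` whose Gram matrix is the antidiagonal
matrix `A_d`:  `φ(x,y) = ∑ i, x i * (y (rev i))^p`. -/
def herm (p d : ℕ) [Fact p.Prime] (x y : Fin d → Fq p) : Fq p :=
  ∑ i : Fin d, x i * (y (Fin.rev i)) ^ p

/-- The orthogonal `U^⊥` of a subspace `U` with respect to the hermitian form. -/
def perp (p d : ℕ) [Fact p.Prime] (U : Submodule (Fq p) (Fin d → Fq p)) :
    Submodule (Fq p) (Fin d → Fq p) where
  carrier := {x | ∀ u ∈ U, herm p d x u = 0}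
  add_mem' := by
    intro a b ha hb u hu
    have h : herm p d (a + b) u = herm p d a u + herm p d b u := by
      simp [herm, add_mul, Finset.sum_add_distrib]
    rw [h, ha u hu, hb u hu, add_zero]
  zero_mem' := by
    intro u hu
    simp [herm]
  smul_mem' := by
    intro c x hx u hu
    have h : herm p d (c • x) u = c * herm p d x u := by
      simp [herm, Finset.mul_sum, mul_assoc]
    rw [h, hx u hu, mul_zero]

/-- `ν(r,d)`: the number of `r`-dimensional subspaces `U ⊆ 𝔽_{p²}^d` with `U^⊥ ⊆ U`. -/
def nu (p d r : ℕ) [Fact p.Prime] : ℕ :=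
  Nat.card {U : Submodule (Fq p) (Fin d → Fq p) //
    Module.finrank (Fq p) U = r ∧ perp p d U ≤ U}



open Polynomial

namespace HermAux

variable (p : ℕ) [Fact p.Prime]

lemma card_k : Nat.card (Fq p) = p ^ 2 := GaloisField.card p 2 two_ne_zero

lemma pow_card_k (x : Fq p) : x ^ p ^ 2 = x := by
  haveI : Fintype (Fq p) := Fintype.ofFinite _
  have h := FiniteField.pow_card x
  rwa [← Nat.card_eq_fintype_card, card_k] at h

lemma frob_frob (x : Fq p) : (x ^ p) ^ p = x := by
  rw [← pow_mul, show p * p = p ^ 2 from (pow_two p).symm]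
  exact pow_card_k p x

lemma add_pow_p (x y : Fq p) : (x + y) ^ p = x ^ p + y ^ p := add_pow_char x y p

lemma card_root_le (f : (Fq p)[X]) (hf : f ≠ 0) :
    Nat.card {u : Fq p // f.eval u = 0} ≤ f.natDegree := by
  classical
  have h1 : Nat.card {u : Fq p // f.eval u = 0} = Set.ncard {u : Fq p | f.eval u = 0} :=
    Nat.card_coe_set_eq _
  have h2 : {u : Fq p | f.eval u = 0} = ↑f.roots.toFinset := by
    ext u; simp [Polynomial.mem_roots, hf, Polynomial.IsRoot]
  rw [h1, h2, Set.ncard_coe_finset]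
  exact le_trans (Multiset.toFinset_card_le _) (Polynomial.card_roots' f)

lemma card_ker_le : Nat.card {u : Fq p // u + u ^ p = 0} ≤ p := by
  have hp1 : (1 : ℕ) ≠ p := Ne.symm (Fact.out : p.Prime).ne_one
  have hf : (X ^ p + X : (Fq p)[X]) ≠ 0 := by
    intro h
    have := congrArg (fun f => Polynomial.coeff f p) h
    simp only [Polynomial.coeff_add, Polynomial.coeff_X_pow, Polynomial.coeff_X,
      Polynomial.coeff_zero, if_pos rfl, if_neg hp1] at this
    simp at this
  have hb := card_root_le p (X ^ p + X) hf
  have hdeg : (X ^ p + X : (Fq p)[X]).natDegree ≤ p := by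
    refine le_trans (Polynomial.natDegree_add_le _ _) ?_
    simp [Polynomial.natDegree_X_pow]
    exact (Fact.out : p.Prime).one_lt.le
  have he : Nat.card {u : Fq p // u + u ^ p = 0}
      = Nat.card {u : Fq p // (X ^ p + X : (Fq p)[X]).eval u = 0} := by
    apply Nat.card_congr
    apply Equiv.subtypeEquivRight
    intro x
    simp [add_comm]
  rw [he]; exact le_trans hb hdeg

lemma card_fix_le : Nat.card {u : Fq p // u ^ p = u} ≤ p := by
  have hp1 : (1 : ℕ) ≠ p := Ne.symm (Fact.out : p.Prime).ne_one
  have hf : (X ^ p - X : (Fq p)[X]) ≠ 0 := by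
    intro h
    have := congrArg (fun f => Polynomial.coeff f p) h
    simp only [Polynomial.coeff_sub, Polynomial.coeff_X_pow, Polynomial.coeff_X,
      Polynomial.coeff_zero, if_pos rfl, if_neg hp1] at this
    simp at this
  have hb := card_root_le p (X ^ p - X) hf
  have hdeg : (X ^ p - X : (Fq p)[X]).natDegree ≤ p := by
    refine le_trans (Polynomial.natDegree_sub_le _ _) ?_
    simp [Polynomial.natDegree_X_pow]
    exact (Fact.out : p.Prime).one_lt.le
  have he : Nat.card {u : Fq p // u ^ p = u}
      = Nat.card {u : Fq p // (X ^ p - X : (Fq p)[X]).eval u = 0} := by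
    apply Nat.card_congr
    apply Equiv.subtypeEquivRight
    intro x
    simp [sub_eq_zero]
  rw [he]; exact le_trans hb hdeg

end HermAux


namespace HermAux

variable (p : ℕ) [Fact p.Prime]


/-- the "trace" as an additive hom -/
def Tr : Fq p →+ Fq p := AddMonoidHom.mk' (fun u => u + u ^ p)
  (by intro a b
      show (a + b) + (a + b) ^ p = (a + a ^ p) + (b + b ^ p)
      rw [add_pow_char]; ring)

lemma Tr_apply (u : Fq p) : Tr p u = u + u ^ p := rfl

/-- fibers of the trace over its range all have the kernel's cardinality -/
lemma fiber_card (c : Fq p) (u0 : Fq p) (h : u0 + u0 ^ p = c) :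
    Nat.card {u : Fq p // u + u ^ p = c} = Nat.card {u : Fq p // u + u ^ p = 0} := by
  apply Nat.card_congr
  refine ⟨fun x => ⟨x.1 - u0, ?_⟩, fun x => ⟨x.1 + u0, ?_⟩, ?_, ?_⟩
  · have := x.2
    rw [sub_pow_char]
    linear_combination this - h
  · have := x.2
    rw [add_pow_p]
    linear_combination this + h
  · intro x; ext; simp
  · intro x; ext; simp

lemma card_ker_mul_card_range :
    Nat.card ((Fq p) ⧸ (Tr p).ker) * Nat.card {u : Fq p // u + u ^ p = 0} = p ^ 2 := by
  have h1 : Nat.card ↥(Tr p).ker = Nat.card {u : Fq p // u + u ^ p = 0} := by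
    apply Nat.card_congr
    apply Equiv.subtypeEquivRight
    intro x
    simp [AddMonoidHom.mem_ker, Tr_apply]
  rw [← h1, ← AddSubgroup.card_eq_card_quotient_mul_card_addSubgroup, card_k]

lemma card_quot_le : Nat.card ((Fq p) ⧸ (Tr p).ker) ≤ p := by
  have e : Nat.card ((Fq p) ⧸ (Tr p).ker) = Nat.card ↥(Tr p).range :=
    Nat.card_congr (QuotientAddGroup.quotientKerEquivRange (Tr p)).toEquiv
  rw [e]
  refine le_trans (Nat.card_le_card_of_injective
    (fun x => (⟨x.1, ?_⟩ : {u : Fq p // u ^ p = u})) ?_) (card_fix_le p)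
  · obtain ⟨u, hu⟩ := x.2
    rw [← hu]
    show (Tr p u) ^ p = Tr p u
    rw [Tr_apply, add_pow_p, frob_frob]
    ring
  · intro a b hab
    have h2 := congrArg Subtype.val hab
    exact Subtype.ext h2

/-- The key count: each fiber of the trace over a frobenius-fixed point has `p` elements. -/
lemma key_trace (c : Fq p) (hc : c ^ p = c) :
    Nat.card {u : Fq p // u + u ^ p = c} = p := by
  have hker := card_ker_le p
  have hquot := card_quot_le p
  have hmul := card_ker_mul_card_range p
  have hp2 : 2 ≤ p := (Fact.out : p.Prime).two_le
  -- both factors are exactly p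
  have hkerp : Nat.card {u : Fq p // u + u ^ p = 0} = p := by nlinarith
  have hquotp : Nat.card ((Fq p) ⧸ (Tr p).ker) = p := by nlinarith
  -- the range has cardinality p, hence equals the fixed set, hence c is in the range
  have hrange : Nat.card ↥(Tr p).range = p :=
    (Nat.card_congr (QuotientAddGroup.quotientKerEquivRange (Tr p)).toEquiv).symm.trans hquotp
  -- injection range → fix is bijective
  haveI : Fintype ↥(Tr p).range := Fintype.ofFinite _
  haveI : Fintype {u : Fq p // u ^ p = u} := Fintype.ofFinite _
  have hfixle := card_fix_le p
  have hfix : Nat.card {u : Fq p // u ^ p = u} = p := by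
    have : p ≤ Nat.card {u : Fq p // u ^ p = u} := by
      refine le_trans (le_of_eq hrange.symm) (Nat.card_le_card_of_injective
        (fun x => (⟨x.1, ?_⟩ : {u : Fq p // u ^ p = u})) ?_)
      · obtain ⟨u, hu⟩ := x.2
        rw [← hu]
        show (Tr p u) ^ p = Tr p u
        rw [Tr_apply, add_pow_p, frob_frob]
        ring
      · intro a b hab
        have h2 := congrArg Subtype.val hab
        exact Subtype.ext h2
    omega
  -- surjectivity of the inclusion
  let f : ↥(Tr p).range → {u : Fq p // u ^ p = u} := fun x =>
    ⟨x.1, by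
      obtain ⟨u, hu⟩ := x.2
      rw [← hu]
      show (Tr p u) ^ p = Tr p u
      rw [Tr_apply, add_pow_p, frob_frob]
      ring⟩
  have hfinj : Function.Injective f := by
    intro a b hab
    have h2 := congrArg Subtype.val hab
    exact Subtype.ext h2
  have hfbij : Function.Bijective f := by
    rw [Fintype.bijective_iff_injective_and_card]
    refine ⟨hfinj, ?_⟩
    rw [← Nat.card_eq_fintype_card, ← Nat.card_eq_fintype_card, hrange, hfix]
  obtain ⟨x, hx⟩ := hfbij.2 ⟨c, hc⟩
  obtain ⟨u0, hu0⟩ := x.2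
  have hu0c : Tr p u0 = c := by
    rw [hu0]; exact congrArg Subtype.val hx
  rw [fiber_card p c u0 (by rw [← Tr_apply]; exact hu0c)]
  exact hkerp

end HermAux


namespace HermAux

open scoped Classical

variable (p : ℕ) [Fact p.Prime]

lemma nat_card_sigma {ι : Type} [Fintype ι] (f : ι → Type) [∀ i, Finite (f i)] :
    Nat.card ((i : ι) × f i) = ∑ i, Nat.card (f i) := by
  haveI := fun i => Fintype.ofFinite (f i)
  simp [Nat.card_eq_fintype_card]

lemma card_pairs_b (b c : Fq p) (hb : b ≠ 0) (hc : c ^ p = c) :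
    Nat.card {a : Fq p // a * b ^ p + b * a ^ p = c} = p := by
  have hbp : b ^ p ≠ 0 := pow_ne_zero _ hb
  have e : {a : Fq p // a * b ^ p + b * a ^ p = c} ≃ {u : Fq p // u + u ^ p = c} := by
    refine Equiv.subtypeEquiv (Equiv.mulRight₀ (b ^ p) hbp) ?_
    intro a
    have h1 : (a * b ^ p) ^ p = b * a ^ p := by
      rw [mul_pow, frob_frob]; ring
    show a * b ^ p + b * a ^ p = c ↔ (a * b ^ p) + (a * b ^ p) ^ p = c
    rw [h1]
  rw [Nat.card_congr e]
  exact key_trace p c hc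

lemma card_pairs_zero_b (c : Fq p) :
    Nat.card {a : Fq p // a * (0 : Fq p) ^ p + 0 * a ^ p = c}
      = if c = 0 then p ^ 2 else 0 := by
  have hp0 : p ≠ 0 := (Fact.out : p.Prime).ne_zero
  have hpred : ∀ a : Fq p, (a * (0 : Fq p) ^ p + 0 * a ^ p = c) ↔ (0 = c) := by
    intro a; rw [zero_pow hp0]; constructor <;> intro h <;> linear_combination h
  by_cases hc : c = 0
  · rw [if_pos hc]
    have e : {a : Fq p // a * (0 : Fq p) ^ p + 0 * a ^ p = c} ≃ Fq p :=
      Equiv.subtypeUnivEquiv (fun a => (hpred a).mpr hc.symm)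
    rw [Nat.card_congr e, card_k]
  · rw [if_neg hc]
    haveI : IsEmpty {a : Fq p // a * (0 : Fq p) ^ p + 0 * a ^ p = c} := by
      constructor; rintro ⟨a, ha⟩
      exact hc ((hpred a).mp ha).symm
    exact Nat.card_of_isEmpty

lemma card_pairs (c : Fq p) (hc : c ^ p = c) :
    Nat.card {ab : Fq p × Fq p // ab.1 * ab.2 ^ p + ab.2 * ab.1 ^ p = c}
      = (if c = 0 then p ^ 2 else 0) + (p ^ 2 - 1) * p := by
  classical
  haveI : Fintype (Fq p) := Fintype.ofFinite _
  have e : {ab : Fq p × Fq p // ab.1 * ab.2 ^ p + ab.2 * ab.1 ^ p = c}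
      ≃ (b : Fq p) × {a : Fq p // a * b ^ p + b * a ^ p = c} :=
    ⟨fun x => ⟨x.1.2, ⟨x.1.1, x.2⟩⟩, fun s => ⟨(s.2.1, s.1), s.2.2⟩,
      fun x => rfl, fun s => rfl⟩
  rw [Nat.card_congr e, nat_card_sigma]
  have hsum : ∀ b : Fq p, Nat.card {a : Fq p // a * b ^ p + b * a ^ p = c}
      = if b = 0 then (if c = 0 then p ^ 2 else 0) else p := by
    intro b
    by_cases hb : b = 0
    · subst hb; rw [if_pos rfl]; exact card_pairs_zero_b p c
    · rw [if_neg hb]; exact card_pairs_b p b c hb hc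
  simp_rw [hsum]
  have hcard : Fintype.card (Fq p) = p ^ 2 := by
    rw [← Nat.card_eq_fintype_card, card_k]
  rw [Finset.sum_eq_sum_sdiff_singleton_add (Finset.mem_univ (0 : Fq p))]
  have h0 : (if (0 : Fq p) = 0 then (if c = 0 then p ^ 2 else 0) else p)
      = if c = 0 then p ^ 2 else 0 := if_pos rfl
  have h1 : (∑ x ∈ Finset.univ \ {(0 : Fq p)},
      (if x = 0 then (if c = 0 then p ^ 2 else 0) else p)) = (p ^ 2 - 1) * p := by
    rw [Finset.sum_congr rfl
      (fun x hx => if_neg (by simpa using (Finset.mem_sdiff.mp hx).2))]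
    rw [Finset.sum_const, smul_eq_mul]
    congr 1
    rw [Finset.card_sdiff_of_subset (by simp)]
    simp [Finset.card_univ, hcard]
  rw [h0, h1, Nat.add_comm]

end HermAux


namespace HermAux

section HermLemmas

variable (p : ℕ) [Fact p.Prime]

lemma herm_flip {d : ℕ} (x y : Fin d → Fq p) : herm p d y x = (herm p d x y) ^ p := by
  unfold herm
  rw [sum_pow_char]
  have term : ∀ i : Fin d, (x i * (y (Fin.rev i)) ^ p) ^ p = x i ^ p * y (Fin.rev i) := by
    intro i
    rw [mul_pow, frob_frob]
  rw [Finset.sum_congr rfl (fun i _ => term i)]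
  apply Fintype.sum_equiv Fin.revPerm
  intro i
  simp only [Fin.revPerm_apply, Fin.rev_rev]
  ring

lemma herm_refl {d : ℕ} (x y : Fin d → Fq p) (h : herm p d x y = 0) : herm p d y x = 0 := by
  rw [herm_flip, h, zero_pow (Fact.out : p.Prime).ne_zero]

lemma herm_self_fixed {d : ℕ} (x : Fin d → Fq p) : (herm p d x x) ^ p = herm p d x x :=
  (herm_flip p x x).symm

lemma herm_smul_right {d : ℕ} (c : Fq p) (x y : Fin d → Fq p) :
    herm p d x (c • y) = c ^ p * herm p d x y := by
  unfold herm
  rw [Finset.mul_sum]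
  apply Finset.sum_congr rfl
  intro i _
  simp only [Pi.smul_apply, smul_eq_mul, mul_pow]
  ring

/-- the middle part of a vector in `k^{d+2}` -/
def mid {d : ℕ} (x : Fin (d + 2) → Fq p) (i : Fin d) : Fq p := x i.castSucc.succ

lemma rev_mid {d : ℕ} (i : Fin d) :
    Fin.rev (i.castSucc.succ : Fin (d + 2)) = ((Fin.rev i).castSucc.succ : Fin (d + 2)) := by
  apply Fin.ext
  simp only [Fin.val_rev, Fin.val_succ, Fin.coe_castSucc]
  omega

lemma herm_split {d : ℕ} (x : Fin (d + 2) → Fq p) :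
    herm p (d + 2) x x = x 0 * (x (Fin.last (d + 1))) ^ p
      + x (Fin.last (d + 1)) * (x 0) ^ p + herm p d (mid p x) (mid p x) := by
  unfold herm
  rw [Fin.sum_univ_succ, Fin.sum_univ_castSucc]
  have h0 : Fin.rev (0 : Fin (d + 2)) = Fin.last (d + 1) := Fin.rev_zero _
  have hl : ((Fin.last d).succ : Fin (d + 2)) = Fin.last (d + 1) := Fin.succ_last d
  have hrl : Fin.rev (Fin.last (d + 1) : Fin (d + 2)) = 0 := Fin.rev_last _
  rw [h0, hl, hrl]
  have hmid : ∀ i : Fin d, x (i.castSucc.succ) * (x (Fin.rev i.castSucc.succ)) ^ p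
      = mid p x i * (mid p x (Fin.rev i)) ^ p := by
    intro i
    rw [rev_mid]
    rfl
  rw [Finset.sum_congr rfl (fun i _ => hmid i)]
  ring

end HermLemmas

end HermAux


namespace HermAux

open scoped Classical

section NcardSec

variable (p : ℕ) [Fact p.Prime]

def Ncard (d : ℕ) : ℕ := Nat.card {x : Fin d → Fq p // herm p d x x = 0}

lemma Ncard_zero : Ncard p 0 = 1 := by
  haveI : Unique {x : Fin 0 → Fq p // herm p 0 x x = 0} := by
    refine ⟨⟨⟨fun i => i.elim0, by simp [herm]⟩⟩, ?_⟩
    intro a; apply Subtype.ext; funext i; exact i.elim0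
  exact Nat.card_unique

lemma Ncard_one : Ncard p 1 = 1 := by
  haveI : Unique {x : Fin 1 → Fq p // herm p 1 x x = 0} := by
    refine ⟨⟨⟨fun _ => 0, by simp [herm]⟩⟩, ?_⟩
    intro a
    apply Subtype.ext; funext i
    have h := a.2
    unfold herm at h
    rw [Fin.sum_univ_one] at h
    have h0 : Fin.rev (0 : Fin 1) = 0 := Subsingleton.elim _ _
    rw [h0] at h
    have hi : i = 0 := Subsingleton.elim _ _
    rcases mul_eq_zero.mp h with h' | h'
    · rw [hi]; exact h'
    · rw [hi]; exact pow_eq_zero_iff (Fact.out : p.Prime).ne_zero |>.mp h'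
  exact Nat.card_unique

lemma cons_snoc_last {d : ℕ} (a b : Fq p) (y : Fin d → Fq p) :
    (Fin.cons a (Fin.snoc y b) : Fin (d + 2) → Fq p) (Fin.last (d + 1)) = b := by
  rw [← Fin.succ_last, Fin.cons_succ, Fin.snoc_last]

lemma mid_cons_snoc {d : ℕ} (a b : Fq p) (y : Fin d → Fq p) :
    mid p (Fin.cons a (Fin.snoc y b) : Fin (d + 2) → Fq p) = y := by
  funext i
  show (Fin.cons a (Fin.snoc y b) : Fin (d + 2) → Fq p) (i.castSucc.succ) = y i
  rw [Fin.cons_succ, Fin.snoc_castSucc]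

lemma cons_snoc_eq {d : ℕ} (x : Fin (d + 2) → Fq p) :
    (Fin.cons (x 0) (Fin.snoc (mid p x) (x (Fin.last (d + 1)))) : Fin (d + 2) → Fq p) = x := by
  funext i
  refine Fin.cases ?_ ?_ i
  · rw [Fin.cons_zero]
  · intro j
    rw [Fin.cons_succ]
    refine Fin.lastCases ?_ ?_ j
    · rw [Fin.snoc_last, Fin.succ_last]
    · intro i
      rw [Fin.snoc_castSucc]
      rfl

def fiberEquiv (d : ℕ) (y : Fin d → Fq p) :
    {x : {x : Fin (d + 2) → Fq p // herm p (d + 2) x x = 0} // mid p x.1 = y}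
      ≃ {ab : Fq p × Fq p //
          ab.1 * ab.2 ^ p + ab.2 * ab.1 ^ p = - herm p d y y} where
  toFun x := ⟨(x.1.1 0, x.1.1 (Fin.last (d + 1))), by
    have hs := herm_split p x.1.1
    have h2 := x.1.2
    rw [x.2] at hs
    linear_combination h2 - hs⟩
  invFun s := ⟨⟨Fin.cons s.1.1 (Fin.snoc y s.1.2), by
      rw [herm_split, Fin.cons_zero, cons_snoc_last, mid_cons_snoc]
      linear_combination s.2⟩, mid_cons_snoc p _ _ _⟩
  left_inv := by
    rintro ⟨⟨x1, hx1⟩, hx2⟩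
    subst hx2
    apply Subtype.ext
    apply Subtype.ext
    exact cons_snoc_eq p x1
  right_inv := by
    rintro ⟨⟨a, b⟩, hs⟩
    apply Subtype.ext
    refine Prod.ext_iff.mpr ⟨?_, ?_⟩
    · show (Fin.cons a (Fin.snoc y b) : Fin (d + 2) → Fq p) 0 = a
      exact Fin.cons_zero _ _
    · show (Fin.cons a (Fin.snoc y b) : Fin (d + 2) → Fq p) (Fin.last (d + 1)) = b
      exact cons_snoc_last p a b y

lemma card_fun_eq (d : ℕ) : Nat.card (Fin d → Fq p) = p ^ (2 * d) := by
  haveI : Fintype (Fq p) := Fintype.ofFinite _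
  rw [Nat.card_eq_fintype_card, Fintype.card_fun, ← Nat.card_eq_fintype_card, card_k,
    Fintype.card_fin, ← pow_mul]

lemma Ncard_le (d : ℕ) : Ncard p d ≤ p ^ (2 * d) := by
  rw [← card_fun_eq]
  exact Nat.card_le_card_of_injective Subtype.val Subtype.val_injective

lemma Ncard_rec (hp : Odd p) (d : ℕ) :
    Ncard p (d + 2) = Ncard p d * (p ^ 2 + (p ^ 2 - 1) * p)
      + (p ^ (2 * d) - Ncard p d) * ((p ^ 2 - 1) * p) := by
  classical
  haveI : Fintype (Fq p) := Fintype.ofFinite _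
  have e1 : {x : Fin (d + 2) → Fq p // herm p (d + 2) x x = 0}
      ≃ (y : Fin d → Fq p) ×
          {x : {x : Fin (d + 2) → Fq p // herm p (d + 2) x x = 0} // mid p x.1 = y} :=
    (Equiv.sigmaFiberEquiv (fun x : {x : Fin (d + 2) → Fq p // herm p (d + 2) x x = 0} => mid p x.1)).symm
  rw [Ncard, Nat.card_congr e1, nat_card_sigma]
  have hterm : ∀ y : Fin d → Fq p,
      Nat.card {x : {x : Fin (d + 2) → Fq p // herm p (d + 2) x x = 0} // mid p x.1 = y}
        = if herm p d y y = 0 then p ^ 2 + (p ^ 2 - 1) * p else (p ^ 2 - 1) * p := by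
    intro y
    rw [Nat.card_congr (fiberEquiv p d y)]
    have hc : (- herm p d y y) ^ p = - herm p d y y := by
      rw [hp.neg_pow, herm_self_fixed]
    rw [card_pairs p _ hc]
    by_cases h : herm p d y y = 0
    · rw [if_pos h, if_pos (by rw [h, neg_zero])]
    · rw [if_neg h, if_neg (fun hh => h (neg_eq_zero.mp hh)), Nat.zero_add]
  simp_rw [hterm]
  rw [Finset.sum_ite, Finset.sum_const, Finset.sum_const, smul_eq_mul, smul_eq_mul]
  have hfilt : (Finset.univ.filter (fun y : Fin d → Fq p => herm p d y y = 0)).card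
      = Ncard p d := by
    rw [← Fintype.card_subtype, ← Nat.card_eq_fintype_card]
    rfl
  have hfilt2 : (Finset.univ.filter (fun y : Fin d → Fq p => ¬ herm p d y y = 0)).card
      = p ^ (2 * d) - Ncard p d := by
    have := Finset.card_filter_add_card_filter_not
      (s := (Finset.univ : Finset (Fin d → Fq p)))
      (p := fun y : Fin d → Fq p => herm p d y y = 0)
    rw [Finset.card_univ, ← Nat.card_eq_fintype_card, card_fun_eq] at this
    omega
  rw [hfilt, hfilt2]

end NcardSec

end HermAux


namespace HermAux

section Formula

variable (p : ℕ) [Fact p.Prime]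

lemma Ncard_formula (hp : Odd p) (d : ℕ) :
    (Ncard p (d + 1) : ℤ) =
      ((p:ℤ) ^ d - (-1:ℤ) ^ d) * ((p:ℤ) ^ (d + 1) - (-1:ℤ) ^ (d + 1)) + 1 := by
  have hp2 : (1:ℕ) ≤ p ^ 2 := Nat.one_le_pow _ _ (Fact.out : p.Prime).pos
  have key : ∀ n : ℕ,
      ((Ncard p (n + 1) : ℤ) =
        ((p:ℤ) ^ n - (-1:ℤ) ^ n) * ((p:ℤ) ^ (n + 1) - (-1:ℤ) ^ (n + 1)) + 1)
      ∧ ((Ncard p (n + 2) : ℤ) =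
        ((p:ℤ) ^ (n + 1) - (-1:ℤ) ^ (n + 1)) * ((p:ℤ) ^ (n + 2) - (-1:ℤ) ^ (n + 2)) + 1) := by
    intro n
    induction n with
    | zero =>
      constructor
      · rw [Ncard_one]; norm_num
      · have hrec := Ncard_rec p hp 0
        rw [Ncard_zero] at hrec
        norm_num at hrec
        rw [hrec]
        push_cast [Nat.cast_sub hp2]
        ring
    | succ n ih =>
      refine ⟨ih.2, ?_⟩
      have hrec := Ncard_rec p hp (n + 1)
      have hle := Ncard_le p (n + 1)
      have hrecZ : (Ncard p (n + 3) : ℤ) =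
          (Ncard p (n + 1) : ℤ) * ((p:ℤ) ^ 2 + ((p:ℤ) ^ 2 - 1) * p)
            + ((p:ℤ) ^ (2 * (n + 1)) - (Ncard p (n + 1) : ℤ)) * (((p:ℤ) ^ 2 - 1) * p) := by
        rw [show n + 3 = n + 1 + 2 from rfl, hrec]
        push_cast [Nat.cast_sub hle, Nat.cast_sub hp2]
        ring
      rw [show n + 1 + 2 = n + 3 from rfl, hrecZ, ih.1]
      have he : (-1:ℤ) ^ n * (-1:ℤ) ^ n = 1 := by
        rw [← pow_add, ← two_mul]
        exact Even.neg_one_pow ⟨n, two_mul n⟩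
      simp only [two_mul, pow_add, pow_succ, pow_zero, one_mul]
      linear_combination ((1:ℤ) - (p:ℤ)^2) * he
  exact (key d).1

end Formula

end HermAux


namespace HermAux

section Geometry

variable (p : ℕ) [Fact p.Prime]

instance frobSurj : RingHomSurjective (frobenius (Fq p) p) :=
  ⟨fun x => ⟨x ^ p, frob_frob p x⟩⟩

variable (d : ℕ)

/-- the symmetric bilinear form with antidiagonal Gram matrix -/
def Bform : LinearMap.BilinForm (Fq p) (Fin d → Fq p) :=
  LinearMap.mk₂ (Fq p) (fun x y => ∑ i, x i * y (Fin.rev i))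
    (by intro m1 m2 n; simp [add_mul, Finset.sum_add_distrib])
    (by intro c m n; simp [Finset.mul_sum, mul_assoc])
    (by intro m n1 n2; simp [mul_add, Finset.sum_add_distrib])
    (by
      intro c m n
      simp only [Pi.smul_apply, smul_eq_mul, Finset.mul_sum]
      apply Finset.sum_congr rfl
      intros; ring)

lemma Bform_apply (x y : Fin d → Fq p) : Bform p d x y = ∑ i, x i * y (Fin.rev i) := rfl

lemma Bform_symm (x y : Fin d → Fq p) : Bform p d x y = Bform p d y x := by
  rw [Bform_apply, Bform_apply]
  apply Fintype.sum_equiv Fin.revPerm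
  intro i
  simp only [Fin.revPerm_apply, Fin.rev_rev]
  ring

lemma Bform_refl : (Bform p d).IsRefl := by
  intro x y h
  rw [Bform_symm]
  exact h

lemma Bform_nondeg : (Bform p d).Nondegenerate := by
  refine (LinearMap.IsRefl.nondegenerate_iff_separatingLeft (Bform_refl p d)).mpr ?_
  intro x h
  funext j
  have hj := h (Pi.single (Fin.rev j) 1)
  rw [Bform_apply] at hj
  have : ∀ i ∈ Finset.univ, i ≠ j → x i * (Pi.single (Fin.rev j) 1 : Fin d → Fq p) (Fin.rev i) = 0 := by
    intro i _ hij
    rw [Pi.single_eq_of_ne (fun hc => hij (Fin.rev_injective hc)), mul_zero]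
  rw [Finset.sum_eq_single j this (fun hj' => absurd (Finset.mem_univ j) hj')] at hj
  rw [Pi.single_eq_same, mul_one] at hj
  exact hj

/-- coordinatewise frobenius, as a semilinear map -/
def frobL : (Fin d → Fq p) →ₛₗ[frobenius (Fq p) p] (Fin d → Fq p) where
  toFun x i := (x i) ^ p
  map_add' x y := by funext i; exact add_pow_p p (x i) (y i)
  map_smul' c x := by
    funext i
    show (c * x i) ^ p = frobenius (Fq p) p c * (x i) ^ p
    rw [mul_pow]
    rfl

lemma frobL_injective : Function.Injective (frobL p d) := by
  intro x y h
  funext i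
  have hi : (x i) ^ p = (y i) ^ p := congrFun h i
  calc x i = ((x i) ^ p) ^ p := (frob_frob p (x i)).symm
    _ = ((y i) ^ p) ^ p := by rw [hi]
    _ = y i := frob_frob p (y i)

lemma herm_eq_B (x y : Fin d → Fq p) : herm p d x y = Bform p d x (frobL p d y) := rfl

lemma perp_eq (U : Submodule (Fq p) (Fin d → Fq p)) :
    perp p d U = (Bform p d).orthogonal (U.map (frobL p d)) := by
  ext x
  constructor
  · intro hx n hn
    obtain ⟨u, hu, rfl⟩ := Submodule.mem_map.mp hn
    show Bform p d (frobL p d u) x = 0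
    rw [← Bform_symm, ← herm_eq_B]
    exact hx u hu
  · intro hx u hu
    have := hx (frobL p d u) (Submodule.mem_map_of_mem hu)
    rw [herm_eq_B, Bform_symm]
    exact this

lemma finrank_map_frob (U : Submodule (Fq p) (Fin d → Fq p)) :
    Module.finrank (Fq p) (U.map (frobL p d)) = Module.finrank (Fq p) U := by
  haveI : Fintype (Fq p) := Fintype.ofFinite _
  haveI : Fintype (Fin d → Fq p) := Fintype.ofFinite _
  haveI : Fintype ↥U := Fintype.ofFinite _
  haveI : Fintype ↥(U.map (frobL p d)) := Fintype.ofFinite _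
  have hcard : Nat.card ↥(U.map (frobL p d)) = Nat.card ↥U := by
    have e1 : ↥(U.map (frobL p d)) ≃ ↥(frobL p d '' ↑U) :=
      Equiv.setCongr (Submodule.map_coe (frobL p d) U)
    have e2 : ↥(↑U : Set (Fin d → Fq p)) ≃ ↥(frobL p d '' ↑U) :=
      Equiv.Set.image _ _ (frobL_injective p d)
    rw [Nat.card_congr e1, ← Nat.card_congr e2]
    rfl
  have h1 := Module.card_eq_pow_finrank (K := Fq p) (V := ↥U)
  have h2 := Module.card_eq_pow_finrank (K := Fq p) (V := ↥(U.map (frobL p d)))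
  have hk2 : 2 ≤ Fintype.card (Fq p) := by
    rw [← Nat.card_eq_fintype_card, card_k]
    nlinarith [(Fact.out : p.Prime).two_le]
  apply Nat.pow_right_injective hk2
  show Fintype.card (Fq p) ^ _ = Fintype.card (Fq p) ^ _
  rw [← h1, ← h2, ← Nat.card_eq_fintype_card, ← Nat.card_eq_fintype_card, hcard]

lemma finrank_perp (U : Submodule (Fq p) (Fin d → Fq p)) :
    Module.finrank (Fq p) (perp p d U) = d - Module.finrank (Fq p) U := by
  rw [perp_eq, LinearMap.BilinForm.finrank_orthogonal (Bform_nondeg p d),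
    finrank_map_frob, Module.finrank_fin_fun]

lemma finrank_V : Module.finrank (Fq p) (Fin d → Fq p) = d := Module.finrank_fin_fun _

lemma perp_perp (U : Submodule (Fq p) (Fin d → Fq p)) : perp p d (perp p d U) = U := by
  have hsub : U ≤ perp p d (perp p d U) := by
    intro x hx u hu
    exact herm_refl p u x (hu x hx)
  have hU : Module.finrank (Fq p) U ≤ d := by
    have := Submodule.finrank_le U
    rwa [finrank_V] at this
  have hfr : Module.finrank (Fq p) (perp p d (perp p d U)) ≤ Module.finrank (Fq p) U := by
    rw [finrank_perp, finrank_perp]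
    omega
  exact (Submodule.eq_of_le_of_finrank_le hsub hfr).symm

end Geometry

end HermAux


namespace HermAux

section Count

open scoped Classical

variable (p : ℕ) [Fact p.Prime] (d : ℕ)

instance : Finite (Submodule (Fq p) (Fin d → Fq p)) :=
  Finite.of_injective SetLike.coe SetLike.coe_injective

lemma herm_smul_left {d : ℕ} (c : Fq p) (x y : Fin d → Fq p) :
    herm p d (c • x) y = c * herm p d x y := by
  unfold herm
  rw [Finset.mul_sum]
  apply Finset.sum_congr rfl
  intros
  simp [mul_assoc]

lemma mem_perp_iff {d : ℕ} (U : Submodule (Fq p) (Fin d → Fq p)) (x : Fin d → Fq p) :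
    x ∈ perp p d U ↔ ∀ u ∈ U, herm p d x u = 0 := Iff.rfl

lemma card_T_eq_L (hd : 2 ≤ d) :
    Nat.card {U : Submodule (Fq p) (Fin d → Fq p) //
        Module.finrank (Fq p) U = d - 1 ∧ perp p d U ≤ U}
      = Nat.card {W : Submodule (Fq p) (Fin d → Fq p) //
          Module.finrank (Fq p) W = 1 ∧ W ≤ perp p d W} := by
  apply Nat.card_congr
  refine ⟨fun U => ⟨perp p d U.1, ?_, ?_⟩, fun W => ⟨perp p d W.1, ?_, ?_⟩, ?_, ?_⟩
  · rw [finrank_perp, U.2.1]; omega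
  · intro x hx
    rw [mem_perp_iff]
    intro u hu
    exact hx u (U.2.2 hu)
  · rw [finrank_perp, W.2.1]
  · rw [perp_perp]; exact W.2.2
  · intro U; apply Subtype.ext; exact perp_perp p d U.1
  · intro W; apply Subtype.ext; exact perp_perp p d W.1

lemma span_le_perp (x : Fin d → Fq p) (hx : herm p d x x = 0) :
    Submodule.span (Fq p) {x} ≤ perp p d (Submodule.span (Fq p) {x}) := by
  intro a ha
  rw [mem_perp_iff]
  intro u hu
  obtain ⟨c, rfl⟩ := Submodule.mem_span_singleton.mp ha
  obtain ⟨b, rfl⟩ := Submodule.mem_span_singleton.mp hu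
  rw [herm_smul_left, herm_smul_right, hx, mul_zero, mul_zero]

lemma card_iso_eq_L :
    Nat.card {x : Fin d → Fq p // herm p d x x = 0 ∧ x ≠ 0}
      = Nat.card {W : Submodule (Fq p) (Fin d → Fq p) //
          Module.finrank (Fq p) W = 1 ∧ W ≤ perp p d W} * (p ^ 2 - 1) := by
  classical
  set Lt := {W : Submodule (Fq p) (Fin d → Fq p) //
    Module.finrank (Fq p) W = 1 ∧ W ≤ perp p d W} with hLt
  haveI : Finite Lt := Subtype.finite
  haveI : Fintype Lt := Fintype.ofFinite _
  let f : {x : Fin d → Fq p // herm p d x x = 0 ∧ x ≠ 0} → Lt := fun x =>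
    ⟨Submodule.span (Fq p) {x.1}, finrank_span_singleton x.2.2, span_le_perp p d x.1 x.2.1⟩
  have e1 : {x : Fin d → Fq p // herm p d x x = 0 ∧ x ≠ 0}
      ≃ (W : Lt) × {x : {x : Fin d → Fq p // herm p d x x = 0 ∧ x ≠ 0} // f x = W} :=
    (Equiv.sigmaFiberEquiv f).symm
  rw [Nat.card_congr e1, nat_card_sigma]
  have hfib : ∀ W : Lt,
      Nat.card {x : {x : Fin d → Fq p // herm p d x x = 0 ∧ x ≠ 0} // f x = W}
        = p ^ 2 - 1 := by
    intro W
    have e2 : {x : {x : Fin d → Fq p // herm p d x x = 0 ∧ x ≠ 0} // f x = W}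
        ≃ {y : ↥W.1 // y ≠ 0} := by
      refine ⟨fun x => ⟨⟨x.1.1, ?_⟩, ?_⟩, fun y => ⟨⟨y.1.1, ?_, ?_⟩, ?_⟩, ?_, ?_⟩
      · have hsp : Submodule.span (Fq p) {x.1.1} = W.1 := congrArg Subtype.val x.2
        exact hsp ▸ Submodule.mem_span_singleton_self x.1.1
      · intro h
        exact x.1.2.2 (congrArg Subtype.val h)
      · exact (W.2.2 y.1.2) y.1.1 y.1.2
      · exact fun h => y.2 (Subtype.ext h)
      · apply Subtype.ext
        show Submodule.span (Fq p) {y.1.1} = W.1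
        refine Submodule.eq_of_le_of_finrank_le ?_ ?_
        · rw [Submodule.span_le, Set.singleton_subset_iff]
          exact y.1.2
        · rw [W.2.1, finrank_span_singleton (fun h => y.2 (Subtype.ext h))]
      · intro x
        apply Subtype.ext
        apply Subtype.ext
        rfl
      · intro y
        apply Subtype.ext
        apply Subtype.ext
        rfl
    rw [Nat.card_congr e2]
    haveI : Fintype ↥W.1 := Fintype.ofFinite _
    haveI : Fintype (Fq p) := Fintype.ofFinite _
    have hcW : Fintype.card ↥W.1 = p ^ 2 := by
      rw [Module.card_eq_pow_finrank (K := Fq p) (V := ↥W.1), W.2.1, pow_one,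
        ← Nat.card_eq_fintype_card, card_k]
    rw [Nat.card_eq_fintype_card, Fintype.card_subtype_compl, Fintype.card_subtype_eq, hcW]
  simp_rw [hfib]
  rw [Finset.sum_const, Finset.card_univ, smul_eq_mul, Nat.card_eq_fintype_card]

lemma herm_zero_self : herm p d 0 0 = 0 := by
  unfold herm
  simp

lemma Ncard_eq_iso :
    Ncard p d = Nat.card {x : Fin d → Fq p // herm p d x x = 0 ∧ x ≠ 0} + 1 := by
  classical
  have e := Equiv.sumCompl (fun a : {x : Fin d → Fq p // herm p d x x = 0} => a.1 = 0)
  have h1 : Ncard p d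
      = Nat.card {a : {x : Fin d → Fq p // herm p d x x = 0} // a.1 = 0}
        + Nat.card {a : {x : Fin d → Fq p // herm p d x x = 0} // ¬ a.1 = 0} := by
    rw [Ncard, ← Nat.card_congr e, Nat.card_sum]
  have h2 : Nat.card {a : {x : Fin d → Fq p // herm p d x x = 0} // a.1 = 0} = 1 := by
    haveI : Unique {a : {x : Fin d → Fq p // herm p d x x = 0} // a.1 = 0} := by
      refine ⟨⟨⟨⟨0, herm_zero_self p d⟩, rfl⟩⟩, ?_⟩
      intro a
      apply Subtype.ext
      apply Subtype.ext
      exact a.2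
    exact Nat.card_unique
  have h3 : Nat.card {a : {x : Fin d → Fq p // herm p d x x = 0} // ¬ a.1 = 0}
      = Nat.card {x : Fin d → Fq p // herm p d x x = 0 ∧ x ≠ 0} :=
    Nat.card_congr (Equiv.subtypeSubtypeEquivSubtypeInter
      (fun x : Fin d → Fq p => herm p d x x = 0) (fun x => x ≠ 0))
  omega

end Count

end HermAux


open HermAux

/-- For an odd prime `p` and `d ≥ 2`,
`ν(d−1,d) · (p² − 1) = (p^{d−1} − (−1)^{d−1}) · (p^d − (−1)^d)`. -/
theorem statement1 (p : ℕ) [Fact p.Prime] (hp : Odd p) (d : ℕ) (hd : 2 ≤ d) :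
    (nu p d (d - 1) : ℤ) * ((p : ℤ) ^ 2 - 1) =
      ((p : ℤ) ^ (d - 1) - (-1 : ℤ) ^ (d - 1)) * ((p : ℤ) ^ d - (-1 : ℤ) ^ d) := by
  have hd1 : d - 1 + 1 = d := by omega
  have h1 : nu p d (d - 1)
      = Nat.card {W : Submodule (Fq p) (Fin d → Fq p) //
          Module.finrank (Fq p) W = 1 ∧ W ≤ perp p d W} := card_T_eq_L p d hd
  have h2 := card_iso_eq_L p d
  have h3 := Ncard_eq_iso p d
  have h4 := Ncard_formula p hp (d - 1)
  rw [hd1] at h4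
  have hple : (1:ℕ) ≤ p ^ 2 := Nat.one_le_pow _ _ (Fact.out : p.Prime).pos
  have hcast : ((p ^ 2 - 1 : ℕ) : ℤ) = (p:ℤ) ^ 2 - 1 := by
    rw [Nat.cast_sub hple]
    push_cast
    ring
  calc (nu p d (d - 1) : ℤ) * ((p : ℤ) ^ 2 - 1)
      = ((nu p d (d - 1) * (p ^ 2 - 1) : ℕ) : ℤ) := by rw [Nat.cast_mul, hcast]
    _ = ((Nat.card {x : Fin d → Fq p // herm p d x x = 0 ∧ x ≠ 0} : ℕ) : ℤ) := by
        rw [h1, ← h2]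
    _ = (Ncard p d : ℤ) - 1 := by rw [h3]; push_cast; ring
    _ = ((p : ℤ) ^ (d - 1) - (-1 : ℤ) ^ (d - 1)) * ((p : ℤ) ^ d - (-1 : ℤ) ^ d) := by
        rw [h4]; ring
end
end

section
/- Let i ∈ ℤ with ni even. Let r_{−m},…,r_{−1},r₁,…,r_m and s be integers as in the context, and let Λ = Λ(r_{−m},…,r_{−1},s,r₁,…,r_m). Then Λ ∈ 𝓛_i if and only if: (a) for all 1 ≤ j ≤ m, r_{−j} + r_j ∈ {i, i+1}; (b) s₀ = ⌊(i+1)/2⌋; and (c) if n is even, s₁ = ⌊i/2⌋. Moreover, when these conditions hold, the type of Λ is t(Λ) = 1 + 2·#{1 ≤ j ≤ m : r_{−j} + r_j = i}. -/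
/-!
The hermitian space `𝐕 = ℚ_{p²}^n` of the unitary Rapoport–Zink space of signature
`(1,n-1)`, its lattices `𝓛_i` with their types, and the unitary similitude group
`J = GU(𝐕)`.  Here `ℤ_{p²} = W(𝔽_{p²})` and `ℚ_{p²}` is its fraction field; `σ` is
induced by the Witt vector Frobenius.  Writing `m = ⌊(n-1)/2⌋`, the basis
`e_{-m},…,e_{-1},e₀ˣ,e₁,…,e_m` (odd `n`), resp.
`e_{-m},…,e_{-1},e₀ˣ,e₁ˣ,e₁,…,e_m` (even `n`), is indexed by `Fin n` in this order,
and the Gram matrix of the σ-hermitian form `{·,·}` is the antidiagonal matrix for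
odd `n`, resp. the antidiagonal matrix with middle 2×2 block `diag(1,p)` for even `n`.
-/

noncomputable section

/-- `ℤ_{p²} = W(𝔽_{p²})`, the ring of Witt vectors of the field with `p²` elements. -/
abbrev Zp2 (p : ℕ) [Fact p.Prime] : Type := WittVector p (GaloisField p 2)

/-- `ℚ_{p²}`, the fraction field of `ℤ_{p²}`. -/
abbrev Qp2 (p : ℕ) [Fact p.Prime] : Type := FractionRing (Zp2 p)

/-- The Frobenius `σ` of `ℚ_{p²}`, induced by the Witt vector Frobenius. -/
def frob (p : ℕ) [Fact p.Prime] : Qp2 p ≃+* Qp2 p :=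
  IsFractionRing.ringEquivOfRingEquiv (WittVector.frobeniusEquiv p (GaloisField p 2))

/-- The Gram matrix of the σ-hermitian form `{·,·}` on `𝐕 = ℚ_{p²}^n` in the fixed
basis: for odd `n` it is the antidiagonal matrix; for even `n` the two middle basis
vectors `e₀ˣ, e₁ˣ` (at positions `(n-2)/2` and `(n-2)/2 + 1`) pair with themselves to
`1` and `p` respectively, and all other pairings are antidiagonal. -/
def gram (p n : ℕ) [Fact p.Prime] : Matrix (Fin n) (Fin n) (Qp2 p) :=
  Matrix.of fun i j =>
    if Odd n then (if (i : ℕ) + (j : ℕ) = n - 1 then 1 else 0)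
    else if (i : ℕ) = (n - 2) / 2 ∧ (j : ℕ) = (n - 2) / 2 then 1
    else if (i : ℕ) = (n - 2) / 2 + 1 ∧ (j : ℕ) = (n - 2) / 2 + 1 then (p : Qp2 p)
    else if (i : ℕ) + (j : ℕ) = n - 1 ∧ (i : ℕ) ≠ (n - 2) / 2 ∧ (i : ℕ) ≠ (n - 2) / 2 + 1 then 1
    else 0

/-- The nondegenerate σ-hermitian form `{x,y} = ∑ᵢⱼ xᵢ · gramᵢⱼ · σ(yⱼ)`
(σ-linear in the second variable). -/
def hform (p n : ℕ) [Fact p.Prime] (x y : Fin n → Qp2 p) : Qp2 p :=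
  ∑ i : Fin n, ∑ j : Fin n, x i * gram p n i j * frob p (y j)

/-- A lattice: a finitely generated `ℤ_{p²}`-submodule of `𝐕` containing a
`ℚ_{p²}`-basis of `𝐕`. -/
def IsLattice (p n : ℕ) [Fact p.Prime] (L : Submodule (Zp2 p) (Fin n → Qp2 p)) : Prop :=
  L.FG ∧ Submodule.span (Qp2 p) (L : Set (Fin n → Qp2 p)) = ⊤

/-- The dual lattice `M^∨ = {v : {v,w} ∈ ℤ_{p²} for all w ∈ M}`. -/
def dualLat (p n : ℕ) [Fact p.Prime] (L : Submodule (Zp2 p) (Fin n → Qp2 p)) :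
    Submodule (Zp2 p) (Fin n → Qp2 p) where
  carrier := {v | ∀ w ∈ L, hform p n v w ∈ (algebraMap (Zp2 p) (Qp2 p)).range}
  add_mem' := by
    intro a b ha hb w hw
    have h : hform p n (a + b) w = hform p n a w + hform p n b w := by
      simp [hform, add_mul, Finset.sum_add_distrib]
    rw [h]
    exact add_mem (ha w hw) (hb w hw)
  zero_mem' := by
    intro w hw
    have h : hform p n 0 w = 0 := by simp [hform]
    rw [h]
    exact zero_mem _
  smul_mem' := by
    intro c v hv w hw
    have h : hform p n (c • v) w = algebraMap (Zp2 p) (Qp2 p) c * hform p n v w := by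
      simp [hform, Finset.mul_sum, Algebra.smul_def, mul_assoc]
    rw [h]
    exact mul_mem (RingHom.mem_range_self _ c) (hv w hw)

/-- The scaled lattice `c · L = {c • x : x ∈ L}`. -/
def scaleLat (p n : ℕ) [Fact p.Prime] (c : Qp2 p) (L : Submodule (Zp2 p) (Fin n → Qp2 p)) :
    Submodule (Zp2 p) (Fin n → Qp2 p) :=
  L.map (LinearMap.restrictScalars (Zp2 p) (LinearMap.lsmul (Qp2 p) (Fin n → Qp2 p) c))

/-- `Λ ∈ 𝓛_i`:  `Λ` is a lattice with `p^{i+1}Λ^∨ ⊊ Λ ⊆ p^{i}Λ^∨`. -/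
def inL (p n : ℕ) [Fact p.Prime] (i : ℤ) (Λ : Submodule (Zp2 p) (Fin n → Qp2 p)) : Prop :=
  IsLattice p n Λ ∧
    scaleLat p n ((p : Qp2 p) ^ (i + 1)) (dualLat p n Λ) < Λ ∧
    Λ ≤ scaleLat p n ((p : Qp2 p) ^ i) (dualLat p n Λ)

/-- `Λ ∈ 𝓛 = ⋃_{ni even} 𝓛_i`. -/
def inLL (p n : ℕ) [Fact p.Prime] (Λ : Submodule (Zp2 p) (Fin n → Qp2 p)) : Prop :=
  ∃ i : ℤ, Even ((n : ℤ) * i) ∧ inL p n i Λ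

/-- The length of a `ℤ_{p²}`-module (the Krull dimension of its submodule lattice). -/
def mlen (p : ℕ) [Fact p.Prime] (M : Type) [AddCommGroup M] [Module (Zp2 p) M] : ℕ∞ :=
  (Order.krullDim (Submodule (Zp2 p) M)).unbotD 0

/-- The index `[M₂ : M₁]`: the length of the `ℤ_{p²}`-module `M₂ / M₁` (for `M₁ ⊆ M₂`). -/
def relIdx (p n : ℕ) [Fact p.Prime] (M₁ M₂ : Submodule (Zp2 p) (Fin n → Qp2 p)) : ℕ∞ :=
  mlen p (M₂ ⧸ Submodule.comap M₂.subtype M₁)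

/-- The type `t(Λ) = [Λ : p^{i+1} Λ^∨]` of `Λ ∈ 𝓛_i`. -/
def typeOf (p n : ℕ) [Fact p.Prime] (i : ℤ) (Λ : Submodule (Zp2 p) (Fin n → Qp2 p)) : ℕ∞ :=
  relIdx p n (scaleLat p n ((p : Qp2 p) ^ (i + 1)) (dualLat p n Λ)) Λ

/-- `g ∈ J = GU(𝐕)`: a `ℚ_{p²}`-linear automorphism with `{gx,gy} = c(g)·{x,y}` for a
σ-fixed multiplier `c(g) ∈ ℚ_{p²}ˣ`. -/
def inJ (p n : ℕ) [Fact p.Prime] (g : (Fin n → Qp2 p) ≃ₗ[Qp2 p] (Fin n → Qp2 p)) : Prop :=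
  ∃ c : Qp2 p, c ≠ 0 ∧ frob p c = c ∧ ∀ x y, hform p n (g x) (g y) = c * hform p n x y

/-- The image `g(Λ)` of a lattice under a `ℚ_{p²}`-linear automorphism. -/
def mapLat (p n : ℕ) [Fact p.Prime] (g : (Fin n → Qp2 p) ≃ₗ[Qp2 p] (Fin n → Qp2 p))
    (Λ : Submodule (Zp2 p) (Fin n → Qp2 p)) : Submodule (Zp2 p) (Fin n → Qp2 p) :=
  Λ.map (LinearMap.restrictScalars (Zp2 p) g.toLinearMap)

/-- The lattice `Λ(a) = ⟨ p^{a j} e_j : j ⟩` with diagonal exponents `a : Fin n → ℤ`. -/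
def diagLat (p n : ℕ) [Fact p.Prime] (a : Fin n → ℤ) : Submodule (Zp2 p) (Fin n → Qp2 p) :=
  Submodule.span (Zp2 p)
    (Set.range fun j : Fin n => ((p : Qp2 p) ^ (a j)) • (Pi.single j 1 : Fin n → Qp2 p))

/-- The exponent vector of `Λ(r_{-m},…,r_{-1},s,r₁,…,r_m)`:
position `m - j` carries `r_{-j} = rneg j`, position `m` carries `s₀`, position `m+1`
carries `s₁` (even `n` only), and `e_j` (at position `m + j` for odd `n`, `m + 1 + j`
for even `n`) carries `r_j = rpos j`.  Here `m = (n-1)/2`. -/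
def expVec (n : ℕ) (rneg rpos : ℕ → ℤ) (s0 s1 : ℤ) : Fin n → ℤ := fun idx =>
  if (idx : ℕ) < (n - 1) / 2 then rneg ((n - 1) / 2 - (idx : ℕ))
  else if (idx : ℕ) = (n - 1) / 2 then s0
  else if Even n ∧ (idx : ℕ) = (n - 1) / 2 + 1 then s1
  else rpos ((idx : ℕ) - (if Odd n then (n - 1) / 2 else (n - 1) / 2 + 1))
namespace St8
open scoped BigOperators

variable (p : ℕ) [Fact p.Prime]

lemma irred : Irreducible (p : Zp2 p) := WittVector.irreducible p

lemma algInj : Function.Injective (algebraMap (Zp2 p) (Qp2 p)) :=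
  IsFractionRing.injective _ _

lemma pK_eq : ((p : ℕ) : Qp2 p) = algebraMap (Zp2 p) (Qp2 p) (p : Zp2 p) := by
  simp

lemma pK_ne_zero : ((p : ℕ) : Qp2 p) ≠ 0 := by
  rw [pK_eq]
  intro h
  exact (irred p).ne_zero (algInj p (by simpa using h))

/-- `x` lies in `p^z · ℤ_{p²}` inside `ℚ_{p²}`. -/
def pmem (z : ℤ) (x : Qp2 p) : Prop :=
  ∃ r : Zp2 p, x = algebraMap (Zp2 p) (Qp2 p) r * (p : Qp2 p) ^ z

lemma pmem_zero (z : ℤ) : pmem p z 0 := ⟨0, by simp⟩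

lemma pmem_add {z : ℤ} {x y : Qp2 p} (hx : pmem p z x) (hy : pmem p z y) :
    pmem p z (x + y) := by
  obtain ⟨r, rfl⟩ := hx; obtain ⟨s, rfl⟩ := hy
  exact ⟨r + s, by ring_nf; rw [map_add]; ring⟩

lemma pmem_smul {z : ℤ} {x : Qp2 p} (s : Zp2 p) (hx : pmem p z x) :
    pmem p z (algebraMap (Zp2 p) (Qp2 p) s * x) := by
  obtain ⟨r, rfl⟩ := hx
  exact ⟨s * r, by rw [map_mul]; ring⟩

lemma zpow_p_int_eq (t : ℤ) (ht : 0 ≤ t) :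
    ((p : Qp2 p)) ^ t = algebraMap (Zp2 p) (Qp2 p) ((p : Zp2 p) ^ t.toNat) := by
  rw [map_pow, ← pK_eq]
  rw [← zpow_natCast]
  congr 1
  omega

lemma pmem_shift {z c : ℤ} {x : Qp2 p} :
    pmem p (z + c) (x * (p : Qp2 p) ^ c) ↔ pmem p z x := by
  constructor
  · rintro ⟨r, hr⟩
    refine ⟨r, ?_⟩
    have h2 : x * (p : Qp2 p) ^ c * (p : Qp2 p) ^ (-c)
        = algebraMap (Zp2 p) (Qp2 p) r * (p : Qp2 p) ^ (z + c) * (p : Qp2 p) ^ (-c) := by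
      rw [hr]
    rw [mul_assoc, ← zpow_add₀ (pK_ne_zero p), add_neg_cancel, zpow_zero, mul_one,
        mul_assoc, ← zpow_add₀ (pK_ne_zero p), add_neg_cancel_right] at h2
    exact h2
  · rintro ⟨r, rfl⟩
    exact ⟨r, by rw [zpow_add₀ (pK_ne_zero p)]; ring⟩

lemma pmem_mono {w z : ℤ} (h : w ≤ z) {x : Qp2 p} (hx : pmem p z x) : pmem p w x := by
  obtain ⟨r, rfl⟩ := hx
  refine ⟨r * (p : Zp2 p) ^ (z - w).toNat, ?_⟩
  rw [map_mul, ← zpow_p_int_eq p (z - w) (by omega)]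
  rw [mul_assoc, ← zpow_add₀ (pK_ne_zero p)]
  congr 2
  omega

lemma pmem_pow_iff {w z : ℤ} : pmem p w ((p : Qp2 p) ^ z) ↔ w ≤ z := by
  constructor
  · rintro ⟨r, hr⟩
    by_contra hlt
    push_neg at hlt
    have h1 : algebraMap (Zp2 p) (Qp2 p) r * (p : Qp2 p) ^ (w - z) = 1 := by
      have h2 : (p : Qp2 p) ^ z * (p : Qp2 p) ^ (-z)
          = algebraMap (Zp2 p) (Qp2 p) r * (p : Qp2 p) ^ w * (p : Qp2 p) ^ (-z) := by
        rw [← hr]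
      rw [← zpow_add₀ (pK_ne_zero p), add_neg_cancel, zpow_zero,
          mul_assoc, ← zpow_add₀ (pK_ne_zero p)] at h2
      rw [show w + -z = w - z by ring] at h2
      exact h2.symm
    have h2 : algebraMap (Zp2 p) (Qp2 p) (r * (p : Zp2 p) ^ (w - z).toNat) = 1 := by
      rw [map_mul, ← zpow_p_int_eq p (w - z) (by omega)]
      exact h1
    have h3 : r * (p : Zp2 p) ^ (w - z).toNat = 1 := by
      apply algInj p
      rw [h2, map_one]
    have : IsUnit ((p : Zp2 p)) := by
      apply isUnit_of_dvd_one
      refine Dvd.intro_left (r * (p : Zp2 p) ^ ((w - z).toNat - 1)) ?_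
      rw [← h3, mul_assoc, ← pow_succ]
      congr 2
      omega
    exact (irred p).not_isUnit this
  · intro h
    exact pmem_mono p h ⟨1, by simp⟩

lemma pmem_algebraMap (z : ℤ) (hz : z ≤ 0) (s : Zp2 p) :
    pmem p z (algebraMap (Zp2 p) (Qp2 p) s) :=
  pmem_mono p hz ⟨s, by simp⟩

lemma pmem_one_algebraMap_iff (s : Zp2 p) :
    pmem p 1 (algebraMap (Zp2 p) (Qp2 p) s) ↔ (p : Zp2 p) ∣ s := by
  constructor
  · rintro ⟨r, hr⟩
    refine ⟨r, ?_⟩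
    apply algInj p
    rw [hr, map_mul, pK_eq]
    rw [zpow_one]
    ring
  · rintro ⟨r, rfl⟩
    exact ⟨r, by rw [map_mul, pK_eq, zpow_one]; ring⟩

lemma mem_range_iff_pmem_zero (x : Qp2 p) :
    x ∈ (algebraMap (Zp2 p) (Qp2 p)).range ↔ pmem p 0 x := by
  constructor
  · rintro ⟨r, rfl⟩; exact ⟨r, by simp⟩
  · rintro ⟨r, rfl⟩; exact ⟨r, by simp⟩

end St8
namespace St8
variable (p : ℕ) [Fact p.Prime]

lemma frob_algebraMap (r : Zp2 p) :
    frob p (algebraMap (Zp2 p) (Qp2 p) r)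
      = algebraMap (Zp2 p) (Qp2 p) (WittVector.frobeniusEquiv p (GaloisField p 2) r) :=
  IsFractionRing.ringEquivOfRingEquiv_algebraMap _ _

lemma frob_p : frob p ((p : ℕ) : Qp2 p) = ((p : ℕ) : Qp2 p) := map_natCast _ p

lemma frob_zpow (z : ℤ) : frob p ((p : Qp2 p) ^ z) = (p : Qp2 p) ^ z := by
  rw [map_zpow₀, frob_p]

/-- The coordinatewise description of a diagonal lattice. -/
def coordLat (n : ℕ) (a : Fin n → ℤ) : Submodule (Zp2 p) (Fin n → Qp2 p) where
  carrier := {v | ∀ k, pmem p (a k) (v k)}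
  add_mem' := fun hx hy k => pmem_add p (hx k) (hy k)
  zero_mem' := fun k => pmem_zero p _
  smul_mem' := by
    intro c v hv k
    rw [show (c • v) k = algebraMap (Zp2 p) (Qp2 p) c * v k by simp [Algebra.smul_def]]
    exact pmem_smul p c (hv k)

lemma mem_coordLat {n : ℕ} {a : Fin n → ℤ} {v : Fin n → Qp2 p} :
    v ∈ coordLat p n a ↔ ∀ k, pmem p (a k) (v k) := Iff.rfl

lemma single_mem_coordLat {n : ℕ} (a : Fin n → ℤ) (j : Fin n) {x : Qp2 p}
    (hx : pmem p (a j) x) : Pi.single j x ∈ coordLat p n a := by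
  intro k
  rcases eq_or_ne k j with rfl | hkj
  · simpa using hx
  · rw [Pi.single_eq_of_ne hkj]
    exact pmem_zero p _

lemma diagLat_eq (n : ℕ) (a : Fin n → ℤ) : diagLat p n a = coordLat p n a := by
  apply le_antisymm
  · rw [diagLat, Submodule.span_le]
    rintro _ ⟨j, rfl⟩
    dsimp only
    have : ((p : Qp2 p) ^ (a j)) • (Pi.single j 1 : Fin n → Qp2 p)
        = Pi.single j ((p : Qp2 p) ^ (a j)) := by
      ext k
      rcases eq_or_ne k j with rfl | hkj
      · simp
      · simp [Pi.single_eq_of_ne hkj]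
    rw [this]
    exact single_mem_coordLat p a j ⟨1, by simp⟩
  · intro v hv
    have hv' : v = ∑ k : Fin n, Pi.single k (v k) := by
      ext j; simp [Pi.single_apply]
    rw [hv']
    apply Submodule.sum_mem
    intro k _
    obtain ⟨r, hr⟩ := hv k
    have : Pi.single k (v k) = r • (((p : Qp2 p) ^ (a k)) • (Pi.single k 1 : Fin n → Qp2 p)) := by
      ext j
      rcases eq_or_ne j k with rfl | hjk
      · simp [hr, Algebra.smul_def]
      · simp [Pi.single_eq_of_ne hjk]
    rw [this]
    exact Submodule.smul_mem _ _ (Submodule.subset_span ⟨k, rfl⟩)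

lemma coordLat_le_iff {n : ℕ} (a b : Fin n → ℤ) :
    coordLat p n a ≤ coordLat p n b ↔ ∀ k, b k ≤ a k := by
  constructor
  · intro h k
    have hmem : (Pi.single k ((p : Qp2 p) ^ (a k)) : Fin n → Qp2 p) ∈ coordLat p n a :=
      single_mem_coordLat p a k ⟨1, by simp⟩
    have := h hmem k
    rw [Pi.single_eq_same] at this
    exact (pmem_pow_iff p).mp this
  · intro h v hv k
    exact pmem_mono p (h k) (hv k)

lemma scale_coordLat (n : ℕ) (c : ℤ) (a : Fin n → ℤ) :
    scaleLat p n ((p : Qp2 p) ^ c) (coordLat p n a) = coordLat p n (fun k => c + a k) := by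
  ext v
  rw [scaleLat, Submodule.mem_map]
  constructor
  · rintro ⟨x, hx, rfl⟩
    intro k
    dsimp only
    rw [LinearMap.restrictScalars_apply, LinearMap.lsmul_apply, Pi.smul_apply, smul_eq_mul,
      mul_comm, show c + a k = a k + c by ring]
    exact (pmem_shift p).mpr (hx k)
  · intro hv
    refine ⟨((p : Qp2 p) ^ (-c)) • v, ?_, ?_⟩
    · intro k
      have hk := hv k
      dsimp only at hk
      rw [Pi.smul_apply, smul_eq_mul, mul_comm, show a k = (c + a k) + (-c) by ring]
      exact (pmem_shift p).mpr hk
    · show ((p : Qp2 p) ^ c) • (((p : Qp2 p) ^ (-c)) • v) = v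
      rw [smul_smul, ← zpow_add₀ (pK_ne_zero p), add_neg_cancel, zpow_zero, one_smul]

end St8
namespace St8
variable (p : ℕ) [Fact p.Prime]

/-- The pairing involution on indices. -/
def pairIdx (n : ℕ) (k : Fin n) : Fin n :=
  if Even n ∧ ((k : ℕ) = (n - 1) / 2 ∨ (k : ℕ) = (n - 1) / 2 + 1) then k
  else ⟨n - 1 - (k : ℕ), by have := k.2; omega⟩

/-- The exponent of `p` in the nonzero Gram entry in row `k`. -/
def eps (n : ℕ) (k : Fin n) : ℕ :=
  if Even n ∧ (k : ℕ) = (n - 1) / 2 + 1 then 1 else 0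

lemma pairIdx_coe (n : ℕ) (k : Fin n) :
    ((pairIdx n k : Fin n) : ℕ)
      = if Even n ∧ ((k : ℕ) = (n - 1) / 2 ∨ (k : ℕ) = (n - 1) / 2 + 1) then (k : ℕ)
        else n - 1 - (k : ℕ) := by
  rw [pairIdx]
  split_ifs <;> rfl

lemma pairIdx_coe_mid {n : ℕ} {k : Fin n} (he : Even n)
    (h : (k : ℕ) = (n - 1) / 2 ∨ (k : ℕ) = (n - 1) / 2 + 1) : pairIdx n k = k := by
  rw [pairIdx, if_pos ⟨he, h⟩]

lemma pairIdx_coe_not_mid {n : ℕ} {k : Fin n}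
    (h : ¬ (Even n ∧ ((k : ℕ) = (n - 1) / 2 ∨ (k : ℕ) = (n - 1) / 2 + 1))) :
    ((pairIdx n k : Fin n) : ℕ) = n - 1 - (k : ℕ) := by
  rw [pairIdx_coe, if_neg h]

lemma pairIdx_pairIdx (n : ℕ) (k : Fin n) : pairIdx n (pairIdx n k) = k := by
  have hk := k.2
  rcases Nat.even_or_odd n with he | ho
  · obtain ⟨t, ht⟩ := id he
    by_cases hmid : (k : ℕ) = (n - 1) / 2 ∨ (k : ℕ) = (n - 1) / 2 + 1
    · have h1 : pairIdx n k = k := pairIdx_coe_mid he hmid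
      rw [h1, h1]
    · have h1 : ((pairIdx n k : Fin n) : ℕ) = n - 1 - (k : ℕ) :=
        pairIdx_coe_not_mid (by tauto)
      apply Fin.ext
      rw [pairIdx_coe_not_mid, h1]
      · omega
      · rintro ⟨-, hc⟩
        rw [h1] at hc
        omega
  · have hne : ¬ Even n := Nat.not_even_iff_odd.mpr ho
    have h1 : ((pairIdx n k : Fin n) : ℕ) = n - 1 - (k : ℕ) :=
      pairIdx_coe_not_mid (by tauto)
    apply Fin.ext
    rw [pairIdx_coe_not_mid (by tauto), h1]
    omega

lemma eps_pairIdx (n : ℕ) (k : Fin n) : eps n (pairIdx n k) = eps n k := by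
  have hk := k.2
  rcases Nat.even_or_odd n with he | ho
  · obtain ⟨t, ht⟩ := id he
    by_cases hmid : (k : ℕ) = (n - 1) / 2 ∨ (k : ℕ) = (n - 1) / 2 + 1
    · rw [pairIdx_coe_mid he hmid]
    · have h1 : ((pairIdx n k : Fin n) : ℕ) = n - 1 - (k : ℕ) :=
        pairIdx_coe_not_mid (by tauto)
      rw [eps, eps, if_neg, if_neg]
      · rintro ⟨-, hc⟩; exact hmid (Or.inr hc)
      · rintro ⟨-, hc⟩
        rw [h1] at hc
        omega
  · have hne : ¬ Even n := Nat.not_even_iff_odd.mpr ho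
    rw [eps, eps, if_neg (by tauto), if_neg (by tauto)]

lemma gram_eq (n : ℕ) (k j : Fin n) :
    gram p n k j = if j = pairIdx n k then (p : Qp2 p) ^ ((eps n k : ℕ) : ℤ) else 0 := by
  have hk := k.2
  have hj := j.2
  rcases Nat.even_or_odd n with he | ho
  · have hno : ¬ Odd n := Nat.not_odd_iff_even.mpr he
    obtain ⟨t, ht⟩ := id he
    have h21 : (n - 2) / 2 = (n - 1) / 2 := by omega
    rw [gram, Matrix.of_apply, if_neg hno]
    simp only [h21]
    by_cases hk1 : (k : ℕ) = (n - 1) / 2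
    · have hpair : pairIdx n k = k := pairIdx_coe_mid he (Or.inl hk1)
      have heps : eps n k = 0 := by rw [eps, if_neg (by omega)]
      rw [hpair, heps]
      by_cases hc : j = k
      · subst hc
        rw [if_pos ⟨hk1, hk1⟩, if_pos rfl]
        norm_num
      · rw [if_neg (fun hx => hc (Fin.ext (by omega))), if_neg (by omega), if_neg (by omega),
          if_neg hc]
    · by_cases hk2 : (k : ℕ) = (n - 1) / 2 + 1
      · have hpair : pairIdx n k = k := pairIdx_coe_mid he (Or.inr hk2)
        have heps : eps n k = 1 := by rw [eps, if_pos ⟨he, hk2⟩]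
        rw [hpair, heps]
        by_cases hc : j = k
        · subst hc
          rw [if_neg (by omega), if_pos ⟨hk2, hk2⟩, if_pos rfl]
          norm_num
        · rw [if_neg (by omega), if_neg (fun hx => hc (Fin.ext (by omega))), if_neg (by omega),
            if_neg hc]
      · have hpc : ((pairIdx n k : Fin n) : ℕ) = n - 1 - (k : ℕ) :=
          pairIdx_coe_not_mid (by tauto)
        have heps : eps n k = 0 := by rw [eps, if_neg (by tauto)]
        rw [heps]
        by_cases hc : j = pairIdx n k
        · have hjc : (j : ℕ) = n - 1 - (k : ℕ) := by rw [hc, hpc]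
          rw [if_neg (by omega), if_neg (by omega), if_pos ⟨by omega, hk1, hk2⟩, if_pos hc]
          norm_num
        · have hjc : (j : ℕ) ≠ n - 1 - (k : ℕ) := fun hx => hc (Fin.ext (by rw [hpc]; omega))
          rw [if_neg (by omega), if_neg (by omega), if_neg (by omega), if_neg hc]
  · have hne : ¬ Even n := Nat.not_even_iff_odd.mpr ho
    obtain ⟨t, ht⟩ := id ho
    have hpc : ((pairIdx n k : Fin n) : ℕ) = n - 1 - (k : ℕ) :=
      pairIdx_coe_not_mid (by tauto)
    have heps : eps n k = 0 := by rw [eps, if_neg (by tauto)]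
    rw [gram, Matrix.of_apply, if_pos ho, heps]
    by_cases hc : j = pairIdx n k
    · have hjc : (j : ℕ) = n - 1 - (k : ℕ) := by rw [hc, hpc]
      rw [if_pos (by omega), if_pos hc]
      norm_num
    · have hjc : (j : ℕ) ≠ n - 1 - (k : ℕ) := fun hx => hc (Fin.ext (by rw [hpc]; omega))
      rw [if_neg (by omega), if_neg hc]

end St8
namespace St8
variable (p : ℕ) [Fact p.Prime]

lemma hform_single (n : ℕ) (v : Fin n → Qp2 p) (j : Fin n) (x : Qp2 p) :
    hform p n v (Pi.single j x)
      = v (pairIdx n j) * (p : Qp2 p) ^ ((eps n j : ℕ) : ℤ) * frob p x := by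
  rw [hform]
  have hrow : ∀ k : Fin n,
      (∑ j' : Fin n, v k * gram p n k j' * frob p ((Pi.single j x : Fin n → Qp2 p) j'))
        = v k * gram p n k j * frob p x := by
    intro k
    rw [Finset.sum_eq_single j]
    · rw [Pi.single_eq_same]
    · intro j' _ hj'
      rw [Pi.single_eq_of_ne hj', map_zero, mul_zero]
    · intro h
      exact absurd (Finset.mem_univ j) h
  simp only [hrow]
  rw [Finset.sum_eq_single (pairIdx n j)]
  · rw [gram_eq]
    have hj2 : j = pairIdx n (pairIdx n j) := (pairIdx_pairIdx n j).symm
    rw [if_pos hj2, eps_pairIdx]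
  · intro k _ hk
    rw [gram_eq, if_neg, mul_zero, zero_mul]
    intro hc
    exact hk (by rw [hc, pairIdx_pairIdx])
  · intro h
    exact absurd (Finset.mem_univ _) h

lemma dual_coordLat (n : ℕ) (a : Fin n → ℤ) :
    dualLat p n (coordLat p n a)
      = coordLat p n (fun k => -((eps n k : ℕ) : ℤ) - a (pairIdx n k)) := by
  apply le_antisymm
  · intro v hv k
    have hgen : (Pi.single (pairIdx n k) ((p : Qp2 p) ^ (a (pairIdx n k))) : Fin n → Qp2 p)
        ∈ coordLat p n a :=
      single_mem_coordLat p a _ ⟨1, by simp⟩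
    have := hv _ hgen
    rw [hform_single, pairIdx_pairIdx, eps_pairIdx, frob_zpow] at this
    rw [mem_range_iff_pmem_zero] at this
    rw [mul_assoc, ← zpow_add₀ (pK_ne_zero p)] at this
    have h0 : (0 : ℤ) = (-((eps n k : ℕ) : ℤ) - a (pairIdx n k)) + ((eps n k : ℕ) + a (pairIdx n k)) := by
      ring
    rw [h0] at this
    exact (pmem_shift p).mp this
  · intro v hv w hw
    rw [hform]
    have hterm : ∀ k : Fin n,
        (∑ j : Fin n, v k * gram p n k j * frob p (w j)) ∈ (algebraMap (Zp2 p) (Qp2 p)).range := by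
      intro k
      have hcol : (∑ j : Fin n, v k * gram p n k j * frob p (w j))
          = v k * (p : Qp2 p) ^ ((eps n k : ℕ) : ℤ) * frob p (w (pairIdx n k)) := by
        rw [Finset.sum_eq_single (pairIdx n k)]
        · rw [gram_eq, if_pos rfl]
        · intro j _ hj
          rw [gram_eq, if_neg hj, mul_zero, zero_mul]
        · intro h
          exact absurd (Finset.mem_univ _) h

      rw [hcol]
      obtain ⟨s, hs⟩ := hv k
      obtain ⟨r, hr⟩ := hw (pairIdx n k)
      dsimp only at hs
      rw [hs, hr, map_mul, frob_algebraMap, frob_zpow]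
      refine ⟨s * WittVector.frobeniusEquiv p (GaloisField p 2) r, ?_⟩
      rw [map_mul]
      have hcomb : (p : Qp2 p) ^ (-((eps n k : ℕ) : ℤ) - a (pairIdx n k))
          * (p : Qp2 p) ^ ((eps n k : ℕ) : ℤ) * (p : Qp2 p) ^ (a (pairIdx n k)) = 1 := by
        rw [← zpow_add₀ (pK_ne_zero p), ← zpow_add₀ (pK_ne_zero p),
          show -((eps n k : ℕ) : ℤ) - a (pairIdx n k) + ((eps n k : ℕ) : ℤ) + a (pairIdx n k)
            = 0 by ring, zpow_zero]
      linear_combination (- (algebraMap (Zp2 p) (Qp2 p) s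
        * algebraMap (Zp2 p) (Qp2 p) (WittVector.frobeniusEquiv p (GaloisField p 2) r))) * hcomb
    exact Subring.sum_mem _ (fun k _ => hterm k)

end St8
namespace St8
set_option synthInstance.maxHeartbeats 1000000
set_option maxHeartbeats 1000000
variable (p : ℕ) [Fact p.Prime]

lemma mlen_congr {M N : Type} [AddCommGroup M] [Module (Zp2 p) M]
    [AddCommGroup N] [Module (Zp2 p) N] (e : M ≃ₗ[Zp2 p] N) : mlen p M = mlen p N := by
  rw [mlen, mlen, Order.krullDim_eq_of_orderIso (Submodule.orderIsoMapComap e)]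

/-- The residue field of `ℤ_{p²}`. -/
abbrev Fq : Type := (Zp2 p) ⧸ (Ideal.span {(p : Zp2 p)})

lemma span_p_maximal : (Ideal.span {(p : Zp2 p)}).IsMaximal := by
  haveI : IsDiscreteValuationRing (Zp2 p) :=
    WittVector.isDiscreteValuationRing (p := p) (k := GaloisField p 2)
  exact PrincipalIdealRing.isMaximal_of_irreducible (irred p)

/-- Any strictly increasing series of subspaces of a finite dimensional vector space has
length at most the dimension. -/
lemma ltseries_length_le_finrank (K V : Type) [Field K] [AddCommGroup V] [Module K V]
    [FiniteDimensional K V] (γ : LTSeries (Submodule K V)) :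
    γ.length ≤ Module.finrank K V := by
  have key : ∀ t : ℕ, ∀ ht : t ≤ γ.length, t ≤ Module.finrank K (γ.toFun ⟨t, by omega⟩) := by
    intro t
    induction t with
    | zero => intro _; exact Nat.zero_le _
    | succ s ih =>
      intro ht
      have h1 : s ≤ Module.finrank K (γ.toFun ⟨s, by omega⟩) := ih (by omega)
      have h2 : (γ.toFun ⟨s, by omega⟩) < (γ.toFun ⟨s + 1, by omega⟩) :=
        γ.strictMono (by simp [Fin.lt_def])
      have h3 := Submodule.finrank_lt_finrank_of_lt h2
      omega
  have h4 := key γ.length le_rfl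
  have h5 : Module.finrank K (γ.toFun ⟨γ.length, by omega⟩) ≤ Module.finrank K V :=
    Submodule.finrank_le _
  omega

section krullPi

variable (S : Type) [Fintype S] [DecidableEq S]

/-- transfer an `ℤ_{p²}`-submodule of an `Fq`-vector space to an `Fq`-subspace. -/
def toFq (N : Submodule (Zp2 p) (S → Fq p)) : Submodule (Fq p) (S → Fq p) where
  carrier := N
  add_mem' := fun ha hb => N.add_mem ha hb
  zero_mem' := N.zero_mem
  smul_mem' := by
    intro c x hx
    obtain ⟨r, rfl⟩ := Ideal.Quotient.mk_surjective c
    have : (Ideal.Quotient.mk (Ideal.span {(p : Zp2 p)}) r) • x = r • x := by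
      rw [← Ideal.Quotient.algebraMap_eq, algebraMap_smul]
    rw [this]
    exact N.smul_mem r hx

lemma toFq_strictMono : StrictMono (toFq p S) := by
  apply Monotone.strictMono_of_injective
  · intro N N' h x hx
    exact h hx
  · intro N N' h
    apply SetLike.ext
    intro x
    constructor
    · intro hx
      have : x ∈ toFq p S N := hx
      rw [h] at this
      exact this
    · intro hx
      have : x ∈ toFq p S N' := hx
      rw [← h] at this
      exact this

/-- The chain of "coordinate-supported" submodules. -/
def chainSub (e : S ≃ Fin (Fintype.card S)) (j : ℕ) : Submodule (Zp2 p) (S → Fq p) where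
  carrier := {x | ∀ k : S, j ≤ (e k : ℕ) → x k = 0}
  add_mem' := by
    intro a b ha hb k hk
    rw [Pi.add_apply, ha k hk, hb k hk, add_zero]
  zero_mem' := fun k _ => rfl
  smul_mem' := by
    intro c x hx k hk
    rw [Pi.smul_apply, hx k hk, smul_zero]

lemma mlen_pi_Fq : mlen p (S → Fq p) = (Fintype.card S : ℕ∞) := by
  haveI hmax : (Ideal.span {(p : Zp2 p)}).IsMaximal := span_p_maximal p
  letI : Field (Fq p) := Ideal.Quotient.field _
  haveI : Nontrivial (Fq p) := Ideal.Quotient.nontrivial_iff.mpr hmax.ne_top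
  rw [mlen]
  have hdim : Order.krullDim (Submodule (Zp2 p) (S → Fq p)) = (Fintype.card S : ℕ∞) := by
    apply le_antisymm
    · rw [Order.krullDim]
      apply iSup_le
      intro γ
      have h1 : (γ.map (toFq p S) (toFq_strictMono p S)).length ≤ Module.finrank (Fq p) (S → Fq p) :=
        ltseries_length_le_finrank (Fq p) (S → Fq p) _
      have h2 : Module.finrank (Fq p) (S → Fq p) = Fintype.card S := Module.finrank_pi _
      have h3 : γ.length ≤ Fintype.card S := by
        have : (γ.map (toFq p S) (toFq_strictMono p S)).length = γ.length := rfl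
        omega
      exact_mod_cast Nat.cast_le.mpr h3
    · set e := Fintype.equivFin S
      have hstep : ∀ j : Fin (Fintype.card S),
          chainSub p S e (j : ℕ) < chainSub p S e ((j : ℕ) + 1) := by
        intro j
        constructor
        · intro x hx k hk
          exact hx k (by omega)
        · intro hle
          have hmem : (Pi.single (e.symm j) 1 : S → Fq p) ∈ chainSub p S e ((j : ℕ) + 1) := by
            intro k hk
            have hne : k ≠ e.symm j := by
              intro h
              rw [h, Equiv.apply_symm_apply] at hk
              omega
            exact Pi.single_eq_of_ne hne 1
          have := hle hmem
          have hval := this (e.symm j) (by rw [Equiv.apply_symm_apply])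
          rw [Pi.single_eq_same] at hval
          exact one_ne_zero hval
      let γ : LTSeries (Submodule (Zp2 p) (S → Fq p)) :=
        ⟨Fintype.card S, fun j => chainSub p S e (j : ℕ), by
          intro j
          have := hstep ⟨(j : ℕ), j.2⟩
          simpa using this⟩
      have hlen := Order.LTSeries.length_le_krullDim γ
      exact_mod_cast hlen
  rw [hdim]
  rfl

end krullPi
end St8
namespace St8
set_option synthInstance.maxHeartbeats 1000000
set_option maxHeartbeats 1000000
variable (p : ℕ) [Fact p.Prime]

def phiMap (n : ℕ) (a : Fin n → ℤ) : (Fin n → Zp2 p) →ₗ[Zp2 p] (Fin n → Qp2 p) where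
  toFun r := fun k => algebraMap (Zp2 p) (Qp2 p) (r k) * (p : Qp2 p) ^ (a k)
  map_add' := by
    intro r s
    funext k
    simp only [Pi.add_apply, map_add]
    ring
  map_smul' := by
    intro c r
    funext k
    simp only [Pi.smul_apply, smul_eq_mul, map_mul, RingHom.id_apply, Algebra.smul_def]
    ring

lemma phiMap_mem (n : ℕ) (a : Fin n → ℤ) (r : Fin n → Zp2 p) :
    phiMap p n a r ∈ coordLat p n a := fun k => ⟨r k, rfl⟩

def phiEquiv (n : ℕ) (a : Fin n → ℤ) : (Fin n → Zp2 p) ≃ₗ[Zp2 p] ↥(coordLat p n a) :=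
  LinearEquiv.ofBijective
    (LinearMap.codRestrict (coordLat p n a) (phiMap p n a) (phiMap_mem p n a))
    (by
      constructor
      · intro r s h
        have h' : ∀ k, algebraMap (Zp2 p) (Qp2 p) (r k) * (p : Qp2 p) ^ (a k)
            = algebraMap (Zp2 p) (Qp2 p) (s k) * (p : Qp2 p) ^ (a k) :=
          fun k => congrFun (congrArg Subtype.val h) k
        funext k
        exact algInj p (mul_right_cancel₀ (zpow_ne_zero _ (pK_ne_zero p)) (h' k))
      · rintro ⟨v, hv⟩
        obtain ⟨r, hr⟩ : ∃ r : Fin n → Zp2 p,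
            ∀ k, v k = algebraMap (Zp2 p) (Qp2 p) (r k) * (p : Qp2 p) ^ (a k) :=
          ⟨fun k => (hv k).choose, fun k => (hv k).choose_spec⟩
        exact ⟨r, Subtype.ext (funext fun k => (hr k).symm)⟩)

lemma phiEquiv_apply_coe (n : ℕ) (a : Fin n → ℤ) (r : Fin n → Zp2 p) :
    ((phiEquiv p n a r : ↥(coordLat p n a)) : Fin n → Qp2 p)
      = fun k => algebraMap (Zp2 p) (Qp2 p) (r k) * (p : Qp2 p) ^ (a k) := rfl

def thetaMap (n : ℕ) (C : Fin n → Prop) [DecidablePred C] :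
    (Fin n → Zp2 p) →ₗ[Zp2 p] ({k : Fin n // C k} → Fq p) :=
  LinearMap.pi (fun k => (Ideal.span {(p : Zp2 p)}).mkQ.comp (LinearMap.proj k.1))

lemma theta_surj (n : ℕ) (C : Fin n → Prop) [DecidablePred C] :
    Function.Surjective (thetaMap p n C) := by
  intro y
  choose g hg using fun k : {k : Fin n // C k} =>
    Submodule.Quotient.mk_surjective (Ideal.span {(p : Zp2 p)}) (y k)
  refine ⟨fun k => if h : C k then g ⟨k, h⟩ else 0, ?_⟩
  funext k
  rw [thetaMap, LinearMap.pi_apply, LinearMap.comp_apply, LinearMap.proj_apply,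
    Submodule.mkQ_apply]
  rw [dif_pos k.2]
  rw [Subtype.coe_eta]
  exact hg k

lemma theta_eq_zero_iff (n : ℕ) (C : Fin n → Prop) [DecidablePred C] (r : Fin n → Zp2 p) :
    thetaMap p n C r = 0 ↔ ∀ k : Fin n, C k → (p : Zp2 p) ∣ r k := by
  constructor
  · intro h k hk
    have := congrFun h ⟨k, hk⟩
    rw [thetaMap, LinearMap.pi_apply, LinearMap.comp_apply, LinearMap.proj_apply,
      Submodule.mkQ_apply, Pi.zero_apply, Submodule.Quotient.mk_eq_zero] at this
    exact Ideal.mem_span_singleton.mp this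
  · intro h
    funext k
    rw [thetaMap, LinearMap.pi_apply, LinearMap.comp_apply, LinearMap.proj_apply,
      Submodule.mkQ_apply, Pi.zero_apply, Submodule.Quotient.mk_eq_zero]
    exact Ideal.mem_span_singleton.mpr (h k.1 k.2)

lemma relIdx_coordLat (n : ℕ) (a : Fin n → ℤ) (C : Fin n → Prop) [DecidablePred C] :
    relIdx p n (coordLat p n (fun k => a k + if C k then 1 else 0)) (coordLat p n a)
      = ((Finset.univ.filter C).card : ℕ∞) := by
  classical
  set b : Fin n → ℤ := fun k => a k + if C k then 1 else 0 with hb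
  let ξ : ↥(coordLat p n a) →ₗ[Zp2 p] ({k : Fin n // C k} → Fq p) :=
    (thetaMap p n C).comp (phiEquiv p n a).symm.toLinearMap
  have hsurj : Function.Surjective ξ := by
    apply Function.Surjective.comp (theta_surj p n C)
    exact (phiEquiv p n a).symm.surjective
  have hker : LinearMap.ker ξ = Submodule.comap (coordLat p n a).subtype (coordLat p n b) := by
    ext v
    rw [LinearMap.mem_ker, Submodule.mem_comap]
    set r := (phiEquiv p n a).symm v with hrdef
    have hv : (v : Fin n → Qp2 p)
        = fun k => algebraMap (Zp2 p) (Qp2 p) (r k) * (p : Qp2 p) ^ (a k) := by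
      conv_lhs => rw [show v = phiEquiv p n a r by rw [hrdef, LinearEquiv.apply_symm_apply]]
      exact phiEquiv_apply_coe p n a r
    have hxi : ξ v = thetaMap p n C r := rfl
    rw [hxi, theta_eq_zero_iff]
    show _ ↔ (coordLat p n a).subtype ⟨v, v.2⟩ ∈ coordLat p n b
    rw [Submodule.subtype_apply]
    constructor
    · intro h k
      rw [show ((⟨v, v.2⟩ : ↥(coordLat p n a)) : Fin n → Qp2 p) = (v : Fin n → Qp2 p) from rfl, hv]
      by_cases hC : C k
      · obtain ⟨s, hs⟩ := h k hC
        rw [hb]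
        simp only [if_pos hC]
        rw [show a k + 1 = 1 + a k by ring]
        apply (pmem_shift p).mpr
        rw [hs]
        exact (pmem_one_algebraMap_iff p _).mpr ⟨s, hs ▸ rfl⟩
      · rw [hb]
        simp only [if_neg hC, add_zero]
        exact ⟨r k, rfl⟩
    · intro h k hC
      have hk := h k
      rw [show ((⟨v, v.2⟩ : ↥(coordLat p n a)) : Fin n → Qp2 p) = (v : Fin n → Qp2 p) from rfl,
        hv, hb] at hk
      simp only [if_pos hC] at hk
      rw [show a k + 1 = 1 + a k by ring] at hk
      have := (pmem_shift p).mp hk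
      exact (pmem_one_algebraMap_iff p _).mp this
  rw [relIdx, ← hker]
  rw [mlen_congr p (ξ.quotKerEquivOfSurjective hsurj)]
  rw [mlen_pi_Fq p {k : Fin n // C k}]
  rw [Fintype.card_subtype]

end St8
namespace St8
set_option synthInstance.maxHeartbeats 1000000
set_option maxHeartbeats 1000000
variable (p : ℕ) [Fact p.Prime]

lemma isLattice_coordLat (n : ℕ) (a : Fin n → ℤ) : IsLattice p n (coordLat p n a) := by
  constructor
  · rw [← diagLat_eq, diagLat]
    exact Submodule.fg_span (Set.finite_range _)
  · rw [eq_top_iff]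
    intro x _
    have hx : x = ∑ k : Fin n, Pi.single k (x k) := by
      ext j; simp [Pi.single_apply]
    rw [hx]
    apply Submodule.sum_mem
    intro k _
    have h1 : (Pi.single k ((p : Qp2 p) ^ (a k)) : Fin n → Qp2 p) ∈ coordLat p n a :=
      single_mem_coordLat p a k ⟨1, by simp⟩
    have h2 : (Pi.single k (x k) : Fin n → Qp2 p)
        = (x k * (p : Qp2 p) ^ (-(a k))) • (Pi.single k ((p : Qp2 p) ^ (a k)) : Fin n → Qp2 p) := by
      ext j
      rcases eq_or_ne j k with rfl | hjk
      · rw [Pi.single_eq_same, Pi.smul_apply, Pi.single_eq_same, smul_eq_mul, mul_assoc,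
          ← zpow_add₀ (pK_ne_zero p), neg_add_cancel, zpow_zero, mul_one]
      · rw [Pi.single_eq_of_ne hjk, Pi.smul_apply, Pi.single_eq_of_ne hjk, smul_zero]
    rw [h2]
    exact Submodule.smul_mem _ _ (Submodule.subset_span h1)

lemma inL_coordLat_iff (n : ℕ) (i : ℤ) (a c : Fin n → ℤ)
    (hc : ∀ k, c k = (i + 1) - ((eps n k : ℕ) : ℤ) - a (pairIdx n k)) :
    inL p n i (coordLat p n a)
      ↔ ((∀ k, c k = a k ∨ c k = a k + 1) ∧ ∃ k, c k = a k + 1) := by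
  have h1 : scaleLat p n ((p : Qp2 p) ^ (i + 1)) (dualLat p n (coordLat p n a))
      = coordLat p n (fun k => (i + 1) + (-((eps n k : ℕ) : ℤ) - a (pairIdx n k))) := by
    rw [dual_coordLat, scale_coordLat]
  have h2 : scaleLat p n ((p : Qp2 p) ^ i) (dualLat p n (coordLat p n a))
      = coordLat p n (fun k => i + (-((eps n k : ℕ) : ℤ) - a (pairIdx n k))) := by
    rw [dual_coordLat, scale_coordLat]
  rw [inL, h1, h2, lt_iff_le_not_ge, coordLat_le_iff, coordLat_le_iff, coordLat_le_iff]
  constructor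
  · rintro ⟨-, ⟨hle, hnle⟩, hle2⟩
    constructor
    · intro k
      have ha1 := hle k
      have ha2 := hle2 k
      try dsimp only at ha1 ha2
      have := hc k
      omega
    · by_contra hno
      push_neg at hno
      apply hnle
      intro k
      have ha1 := hle k
      have ha2 := hno k
      have ha3 := hle2 k
      try dsimp only at ha1 ha3 ⊢
      have := hc k
      omega
  · rintro ⟨hall, k0, hk0⟩
    refine ⟨isLattice_coordLat p n a, ⟨?_, ?_⟩, ?_⟩
    · intro k
      have := hall k
      have := hc k
      try dsimp only
      omega
    · intro hco
      have := hco k0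
      have := hc k0
      try dsimp only at this ⊢
      omega
    · intro k
      have := hall k
      have := hc k
      try dsimp only
      omega

end St8
namespace St8

section vals
variable (n : ℕ) (rneg rpos : ℕ → ℤ) (s0 s1 : ℤ)

lemma vals_low {k : Fin n} (hk : (k : ℕ) < (n - 1) / 2) :
    expVec n rneg rpos s0 s1 k = rneg ((n - 1) / 2 - (k : ℕ))
    ∧ expVec n rneg rpos s0 s1 (pairIdx n k) = rpos ((n - 1) / 2 - (k : ℕ))
    ∧ eps n k = 0 := by
  have hk2 := k.2
  have hnotmid : ¬ (Even n ∧ ((k : ℕ) = (n - 1) / 2 ∨ (k : ℕ) = (n - 1) / 2 + 1)) := by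
    rintro ⟨-, hc⟩; omega
  have hpc : ((pairIdx n k : Fin n) : ℕ) = n - 1 - (k : ℕ) := pairIdx_coe_not_mid hnotmid
  refine ⟨by simp only [expVec, if_pos hk], ?_, ?_⟩
  · rcases Nat.even_or_odd n with he | ho
    · obtain ⟨t, ht⟩ := id he
      have hno : ¬ Odd n := Nat.not_odd_iff_even.mpr he
      simp only [expVec, hpc]
      rw [if_neg (by omega), if_neg (by omega), if_neg (by rintro ⟨-, hc⟩; omega),
        if_neg hno]
      congr 1
      omega
    · obtain ⟨t, ht⟩ := id ho
      have hne : ¬ Even n := Nat.not_even_iff_odd.mpr ho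
      simp only [expVec, hpc]
      rw [if_neg (by omega), if_neg (by omega), if_neg (by rintro ⟨hc, -⟩; exact hne hc),
        if_pos ho]
      congr 1
      omega
  · rw [eps, if_neg (by rintro ⟨-, hc⟩; omega)]

lemma vals_mid0 {k : Fin n} (hk : (k : ℕ) = (n - 1) / 2) :
    expVec n rneg rpos s0 s1 k = s0 ∧ pairIdx n k = k ∧ eps n k = 0 := by
  have hk2 := k.2
  refine ⟨by simp only [expVec]; rw [if_neg (by omega), if_pos hk], ?_, ?_⟩
  · rcases Nat.even_or_odd n with he | ho
    · exact pairIdx_coe_mid he (Or.inl hk)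
    · obtain ⟨t, ht⟩ := id ho
      have hne : ¬ Even n := Nat.not_even_iff_odd.mpr ho
      apply Fin.ext
      rw [pairIdx_coe_not_mid (by tauto)]
      omega
  · rw [eps, if_neg (by rintro ⟨-, hc⟩; omega)]

lemma vals_mid1 (he : Even n) {k : Fin n} (hk : (k : ℕ) = (n - 1) / 2 + 1) :
    expVec n rneg rpos s0 s1 k = s1 ∧ pairIdx n k = k ∧ eps n k = 1 := by
  have hk2 := k.2
  refine ⟨?_, pairIdx_coe_mid he (Or.inr hk), by rw [eps, if_pos ⟨he, hk⟩]⟩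
  simp only [expVec]
  rw [if_neg (by omega), if_neg (by omega), if_pos ⟨he, hk⟩]

lemma coverage {k : Fin n} :
    (k : ℕ) < (n - 1) / 2 ∨ (k : ℕ) = (n - 1) / 2
    ∨ (Even n ∧ (k : ℕ) = (n - 1) / 2 + 1)
    ∨ (((pairIdx n k : Fin n) : ℕ) < (n - 1) / 2
        ∧ ¬ (Even n ∧ ((k : ℕ) = (n - 1) / 2 ∨ (k : ℕ) = (n - 1) / 2 + 1))) := by
  have hk2 := k.2
  rcases Nat.even_or_odd n with he | ho
  · obtain ⟨t, ht⟩ := id he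
    by_cases h1 : (k : ℕ) < (n - 1) / 2
    · exact Or.inl h1
    · by_cases h2 : (k : ℕ) = (n - 1) / 2
      · exact Or.inr (Or.inl h2)
      · by_cases h3 : (k : ℕ) = (n - 1) / 2 + 1
        · exact Or.inr (Or.inr (Or.inl ⟨he, h3⟩))
        · refine Or.inr (Or.inr (Or.inr ⟨?_, by rintro ⟨-, hc⟩; omega⟩))
          rw [pairIdx_coe_not_mid (by rintro ⟨-, hc⟩; omega)]
          omega
  · obtain ⟨t, ht⟩ := id ho
    have hne : ¬ Even n := Nat.not_even_iff_odd.mpr ho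
    by_cases h1 : (k : ℕ) < (n - 1) / 2
    · exact Or.inl h1
    · by_cases h2 : (k : ℕ) = (n - 1) / 2
      · exact Or.inr (Or.inl h2)
      · refine Or.inr (Or.inr (Or.inr ⟨?_, by tauto⟩))
        rw [pairIdx_coe_not_mid (by tauto)]
        omega

lemma diff_pair (a : Fin n → ℤ) (i : ℤ) (k : Fin n) :
    (i + 1) - ((eps n (pairIdx n k) : ℕ) : ℤ) - a (pairIdx n (pairIdx n k)) - a (pairIdx n k)
      = (i + 1) - ((eps n k : ℕ) : ℤ) - a (pairIdx n k) - a k := by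
  rw [pairIdx_pairIdx, eps_pairIdx]
  ring

/-- The big combinatorial equivalence. -/
lemma cond_iff (hn : 1 ≤ n) (i : ℤ) (hni : n % 2 = 0 ∨ i % 2 = 0) :
    ((∀ k : Fin n,
        (i + 1) - ((eps n k : ℕ) : ℤ) - expVec n rneg rpos s0 s1 (pairIdx n k)
          = expVec n rneg rpos s0 s1 k
        ∨ (i + 1) - ((eps n k : ℕ) : ℤ) - expVec n rneg rpos s0 s1 (pairIdx n k)
          = expVec n rneg rpos s0 s1 k + 1)
      ∧ ∃ k : Fin n,
        (i + 1) - ((eps n k : ℕ) : ℤ) - expVec n rneg rpos s0 s1 (pairIdx n k)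
          = expVec n rneg rpos s0 s1 k + 1)
    ↔ ((∀ j : ℕ, 1 ≤ j → j ≤ (n - 1) / 2 →
          (rneg j + rpos j = i ∨ rneg j + rpos j = i + 1))
        ∧ s0 = (i + 1) / 2 ∧ (Even n → s1 = i / 2)) := by
  constructor
  · rintro ⟨hall, -⟩
    refine ⟨?_, ?_, ?_⟩
    · intro j hj1 hjm
      have hb : (n - 1) / 2 - j < n := by omega
      set k : Fin n := ⟨(n - 1) / 2 - j, hb⟩ with hkdef
      have hco : (k : ℕ) = (n - 1) / 2 - j := rfl
      have hlt : (k : ℕ) < (n - 1) / 2 := by omega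
      obtain ⟨h1, h2, h3⟩ := vals_low n rneg rpos s0 s1 hlt
      have harg : (n - 1) / 2 - (k : ℕ) = j := by omega
      rw [harg] at h1 h2
      have := hall k
      rw [h1, h2, h3] at this
      push_cast at this
      omega
    · have hb : (n - 1) / 2 < n := by omega
      set k : Fin n := ⟨(n - 1) / 2, hb⟩ with hkdef
      obtain ⟨h1, h2, h3⟩ := vals_mid0 n rneg rpos s0 s1 (k := k) rfl
      have := hall k
      rw [h2, h1, h3] at this
      push_cast at this
      omega
    · intro he
      obtain ⟨t, ht⟩ := id he
      have hb : (n - 1) / 2 + 1 < n := by omega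
      set k : Fin n := ⟨(n - 1) / 2 + 1, hb⟩ with hkdef
      obtain ⟨h1, h2, h3⟩ := vals_mid1 n rneg rpos s0 s1 he (k := k) rfl
      have := hall k
      rw [h2, h1, h3] at this
      push_cast at this
      omega
  · rintro ⟨hj, hs0, hs1⟩
    constructor
    · intro k
      rcases coverage n (k := k) with hlow | hmid0 | ⟨he, hmid1⟩ | ⟨hplow, hnotmid⟩
      · obtain ⟨h1, h2, h3⟩ := vals_low n rneg rpos s0 s1 hlow
        have hk2 := k.2
        have := hj ((n - 1) / 2 - (k : ℕ)) (by omega) (by omega)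
        rw [h1, h2, h3]
        push_cast
        omega
      · obtain ⟨h1, h2, h3⟩ := vals_mid0 n rneg rpos s0 s1 hmid0
        rw [h1, h2, h3]
        push_cast
        omega
      · obtain ⟨h1, h2, h3⟩ := vals_mid1 n rneg rpos s0 s1 he hmid1
        have := hs1 he
        rw [h1, h2, h3]
        push_cast
        omega
      · obtain ⟨h1, h2, h3⟩ := vals_low n rneg rpos s0 s1 hplow
        have hd := diff_pair n (expVec n rneg rpos s0 s1) i k
        have hpk2 := (pairIdx n k).2
        have := hj ((n - 1) / 2 - ((pairIdx n k : Fin n) : ℕ)) (by omega) (by omega)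
        rw [h1, h2, h3] at *
        push_cast at hd ⊢
        omega
    · rcases Nat.even_or_odd n with he | ho
      · obtain ⟨t, ht⟩ := id he
        rcases Int.even_or_odd i with hei | hoi
        · obtain ⟨z, hz⟩ := hei
          have hb : (n - 1) / 2 < n := by omega
          refine ⟨⟨(n - 1) / 2, hb⟩, ?_⟩
          obtain ⟨h1, h2, h3⟩ := vals_mid0 n rneg rpos s0 s1 (k := ⟨(n - 1) / 2, hb⟩) rfl
          rw [h1, h2, h3]
          push_cast
          omega
        · obtain ⟨z, hz⟩ := hoi
          have hb : (n - 1) / 2 + 1 < n := by omega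
          refine ⟨⟨(n - 1) / 2 + 1, hb⟩, ?_⟩
          obtain ⟨h1, h2, h3⟩ := vals_mid1 n rneg rpos s0 s1 he (k := ⟨(n - 1) / 2 + 1, hb⟩) rfl
          rw [h1, h2, h3]
          have := hs1 he
          push_cast
          omega
      · have hio : i % 2 = 0 := by
          rcases hni with h | h
          · obtain ⟨t, ht⟩ := id ho; omega
          · exact h
        have hb : (n - 1) / 2 < n := by omega
        refine ⟨⟨(n - 1) / 2, hb⟩, ?_⟩
        obtain ⟨h1, h2, h3⟩ := vals_mid0 n rneg rpos s0 s1 (k := ⟨(n - 1) / 2, hb⟩) rfl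
        rw [h1, h2, h3]
        push_cast
        omega

end vals
end St8
namespace St8
set_option maxHeartbeats 2000000
set_option synthInstance.maxHeartbeats 1000000

lemma count_eq (n : ℕ) (rneg rpos : ℕ → ℤ) (s0 s1 : ℤ) (hn : 1 ≤ n) (i : ℤ)
    (hni : n % 2 = 0 ∨ i % 2 = 0)
    (hs0 : s0 = (i + 1) / 2) (hs1 : Even n → s1 = i / 2)
    (C : Fin n → Prop) [DecidablePred C]
    (hC : ∀ k : Fin n, C k ↔
      (i + 1) - ((eps n k : ℕ) : ℤ) - expVec n rneg rpos s0 s1 (pairIdx n k)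
        = expVec n rneg rpos s0 s1 k + 1) :
    (Finset.univ.filter C).card
      = 1 + 2 * ((Finset.Icc 1 ((n - 1) / 2)).filter (fun j => rneg j + rpos j = i)).card := by
  classical
  set T := (Finset.Icc 1 ((n - 1) / 2)).filter (fun j => rneg j + rpos j = i) with hT
  set mid : Fin n := dite (n % 2 = 0 ∧ i % 2 = 1)
    (fun h => (⟨(n - 1) / 2 + 1, by omega⟩ : Fin n))
    (fun _ => (⟨(n - 1) / 2, by omega⟩ : Fin n)) with hmid
  set flow : ℕ → Fin n := fun j => ⟨(n - 1) / 2 - j, by omega⟩ with hflow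
  set fhigh : ℕ → Fin n := fun j => ⟨n - 1 - ((n - 1) / 2 - j), by omega⟩ with hfhigh
  have fact_low : ∀ k : Fin n, (k : ℕ) < (n - 1) / 2 →
      (C k ↔ rneg ((n - 1) / 2 - (k : ℕ)) + rpos ((n - 1) / 2 - (k : ℕ)) = i) := by
    intro k hk
    obtain ⟨h1, h2, h3⟩ := vals_low n rneg rpos s0 s1 hk
    rw [hC, h1, h2, h3]
    push_cast
    omega
  have fact_mid0 : ∀ k : Fin n, (k : ℕ) = (n - 1) / 2 → (C k ↔ i % 2 = 0) := by
    intro k hk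
    obtain ⟨h1, h2, h3⟩ := vals_mid0 n rneg rpos s0 s1 hk
    rw [hC, h2, h1, h3]
    push_cast
    omega
  have fact_mid1 : ∀ k : Fin n, Even n → (k : ℕ) = (n - 1) / 2 + 1 → (C k ↔ i % 2 = 1) := by
    intro k he hk
    obtain ⟨h1, h2, h3⟩ := vals_mid1 n rneg rpos s0 s1 he hk
    have := hs1 he
    rw [hC, h2, h1, h3]
    push_cast
    omega
  have fact_high : ∀ k : Fin n, (C (pairIdx n k) ↔ C k) := by
    intro k
    have hd := diff_pair n (expVec n rneg rpos s0 s1) i k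
    rw [hC, hC]
    omega
  have hset : Finset.univ.filter C = {mid} ∪ (T.image flow ∪ T.image fhigh) := by
    ext k
    have hk2 := k.2
    simp only [Finset.mem_filter, Finset.mem_univ, true_and, Finset.mem_union,
      Finset.mem_singleton, Finset.mem_image, hT, Finset.mem_Icc]
    constructor
    · intro hCk
      rcases coverage n (k := k) with hlow | hmid0 | ⟨he, hmid1⟩ | ⟨hplow, hnotmid⟩
      · refine Or.inr (Or.inl ⟨(n - 1) / 2 - (k : ℕ),
          ⟨⟨by omega, by omega⟩, (fact_low k hlow).mp hCk⟩, ?_⟩)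
        apply Fin.ext
        show (n - 1) / 2 - ((n - 1) / 2 - (k : ℕ)) = (k : ℕ)
        omega
      · left
        have hie := (fact_mid0 k hmid0).mp hCk
        rw [hmid, dif_neg (by omega)]
        exact Fin.ext hmid0
      · left
        have hie := (fact_mid1 k he hmid1).mp hCk
        have hne : n % 2 = 0 := Nat.even_iff.mp he
        rw [hmid, dif_pos ⟨hne, hie⟩]
        exact Fin.ext hmid1
      · have hCp := (fact_high k).mpr hCk
        have hpc : ((pairIdx n k : Fin n) : ℕ) = n - 1 - (k : ℕ) := pairIdx_coe_not_mid hnotmid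
        have hsum := (fact_low (pairIdx n k) hplow).mp hCp
        refine Or.inr (Or.inr ⟨(n - 1) / 2 - ((pairIdx n k : Fin n) : ℕ),
          ⟨⟨by omega, by omega⟩, hsum⟩, ?_⟩)
        apply Fin.ext
        show n - 1 - ((n - 1) / 2 - ((n - 1) / 2 - ((pairIdx n k : Fin n) : ℕ))) = (k : ℕ)
        omega
    · intro hk
      rcases hk with hk | ⟨j, ⟨⟨hj1, hjm⟩, hsum⟩, rfl⟩ | ⟨j, ⟨⟨hj1, hjm⟩, hsum⟩, rfl⟩
      · subst hk
        rw [hmid]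
        by_cases hcase : n % 2 = 0 ∧ i % 2 = 1
        · rw [dif_pos hcase]
          exact (fact_mid1 _ (Nat.even_iff.mpr hcase.1) rfl).mpr hcase.2
        · rw [dif_neg hcase]
          exact (fact_mid0 _ rfl).mpr (by omega)
      · have hco : ((flow j : Fin n) : ℕ) = (n - 1) / 2 - j := rfl
        have hlt : ((flow j : Fin n) : ℕ) < (n - 1) / 2 := by omega
        rw [fact_low _ hlt, hco, show (n - 1) / 2 - ((n - 1) / 2 - j) = j by omega]
        exact hsum
      · have hco : ((fhigh j : Fin n) : ℕ) = n - 1 - ((n - 1) / 2 - j) := rfl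
        have hnotmid : ¬ (Even n ∧ (((fhigh j : Fin n) : ℕ) = (n - 1) / 2
            ∨ ((fhigh j : Fin n) : ℕ) = (n - 1) / 2 + 1)) := by
          rintro ⟨he, hc⟩
          have hne : n % 2 = 0 := Nat.even_iff.mp he
          rw [hco] at hc
          omega
        have hpc : ((pairIdx n (fhigh j) : Fin n) : ℕ) = n - 1 - ((fhigh j : Fin n) : ℕ) :=
          pairIdx_coe_not_mid hnotmid
        have hplow : ((pairIdx n (fhigh j) : Fin n) : ℕ) < (n - 1) / 2 := by
          rw [hpc, hco]; omega
        rw [← fact_high]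
        rw [fact_low _ hplow, hpc, hco,
          show (n - 1) / 2 - (n - 1 - (n - 1 - ((n - 1) / 2 - j))) = j by omega]
        exact hsum
  have hinj1 : Set.InjOn flow T := by
    intro j hj j' hj' heq
    rw [hT, Finset.coe_filter, Set.mem_setOf_eq, Finset.mem_Icc] at hj hj'
    have h1 : ((flow j : Fin n) : ℕ) = ((flow j' : Fin n) : ℕ) := by rw [heq]
    have h2 : (n - 1) / 2 - j = (n - 1) / 2 - j' := h1
    omega
  have hinj2 : Set.InjOn fhigh T := by
    intro j hj j' hj' heq
    rw [hT, Finset.coe_filter, Set.mem_setOf_eq, Finset.mem_Icc] at hj hj'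
    have h1 : ((fhigh j : Fin n) : ℕ) = ((fhigh j' : Fin n) : ℕ) := by rw [heq]
    have h2 : n - 1 - ((n - 1) / 2 - j) = n - 1 - ((n - 1) / 2 - j') := h1
    omega
  have hdisj2 : Disjoint (T.image flow) (T.image fhigh) := by
    rw [Finset.disjoint_left]
    rintro x hx hx'
    obtain ⟨j, hj, rfl⟩ := Finset.mem_image.mp hx
    obtain ⟨j', hj', heq⟩ := Finset.mem_image.mp hx'
    rw [hT, Finset.mem_filter, Finset.mem_Icc] at hj hj'
    have h1 : n - 1 - ((n - 1) / 2 - j') = (n - 1) / 2 - j := congrArg Fin.val heq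
    omega
  have hdisj1 : Disjoint ({mid} : Finset (Fin n)) (T.image flow ∪ T.image fhigh) := by
    rw [Finset.disjoint_left]
    rintro x hx hx'
    rw [Finset.mem_singleton] at hx
    subst hx
    have hmco : (mid : ℕ) = (n - 1) / 2 ∨ ((mid : ℕ) = (n - 1) / 2 + 1 ∧ n % 2 = 0) := by
      rw [hmid]
      by_cases hcase : n % 2 = 0 ∧ i % 2 = 1
      · rw [dif_pos hcase]; right; exact ⟨rfl, hcase.1⟩
      · rw [dif_neg hcase]; left; rfl
    rcases Finset.mem_union.mp hx' with hx' | hx'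
    · obtain ⟨j, hj, heq⟩ := Finset.mem_image.mp hx'
      rw [hT, Finset.mem_filter, Finset.mem_Icc] at hj
      have h1 : (n - 1) / 2 - j = (mid : ℕ) := congrArg Fin.val heq
      omega
    · obtain ⟨j, hj, heq⟩ := Finset.mem_image.mp hx'
      rw [hT, Finset.mem_filter, Finset.mem_Icc] at hj
      have h1 : n - 1 - ((n - 1) / 2 - j) = (mid : ℕ) := congrArg Fin.val heq
      omega
  rw [hset, Finset.card_union_of_disjoint hdisj1, Finset.card_union_of_disjoint hdisj2,
    Finset.card_singleton, Finset.card_image_of_injOn hinj1, Finset.card_image_of_injOn hinj2]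
  omega

end St8


set_option maxHeartbeats 1000000 in
set_option synthInstance.maxHeartbeats 400000 in
/-- `Λ(r_{-m},…,r_{-1},s,r₁,…,r_m) ∈ 𝓛_i` iff
`r_{-j} + r_j ∈ {i, i+1}` for `1 ≤ j ≤ m`, `s₀ = ⌊(i+1)/2⌋`, and `s₁ = ⌊i/2⌋` when `n`
is even; and in that case its type is `1 + 2·#{1 ≤ j ≤ m : r_{-j} + r_j = i}`. -/
theorem statement8 (p : ℕ) [Fact p.Prime] (n : ℕ) (hn : 1 ≤ n) (i : ℤ)
    (hi : Even ((n : ℤ) * i)) (rneg rpos : ℕ → ℤ) (s0 s1 : ℤ) :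
    (inL p n i (diagLat p n (expVec n rneg rpos s0 s1)) ↔
      ((∀ j : ℕ, 1 ≤ j → j ≤ (n - 1) / 2 →
          (rneg j + rpos j = i ∨ rneg j + rpos j = i + 1)) ∧
        s0 = (i + 1) / 2 ∧ (Even n → s1 = i / 2))) ∧
    (((∀ j : ℕ, 1 ≤ j → j ≤ (n - 1) / 2 →
          (rneg j + rpos j = i ∨ rneg j + rpos j = i + 1)) ∧
        s0 = (i + 1) / 2 ∧ (Even n → s1 = i / 2)) →
      typeOf p n i (diagLat p n (expVec n rneg rpos s0 s1)) =
        ((1 + 2 * ((Finset.Icc 1 ((n - 1) / 2)).filter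
            (fun j => rneg j + rpos j = i)).card : ℕ) : ℕ∞)) := by
  have hni : n % 2 = 0 ∨ i % 2 = 0 := by
    rcases Int.even_mul.mp hi with he | he
    · left
      exact Nat.even_iff.mp ((Int.even_coe_nat n).mp he)
    · right
      exact Int.even_iff.mp he
  have hIff := St8.inL_coordLat_iff p n i (expVec n rneg rpos s0 s1)
    (fun k => (i + 1) - ((St8.eps n k : ℕ) : ℤ)
      - expVec n rneg rpos s0 s1 (St8.pairIdx n k)) (fun k => rfl)
  have hCond := St8.cond_iff n rneg rpos s0 s1 hn i hni
  constructor
  · rw [St8.diagLat_eq, hIff]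
    exact hCond
  · intro hcond
    have hall := (hCond.mpr hcond).1
    rw [typeOf, St8.diagLat_eq, St8.dual_coordLat, St8.scale_coordLat]
    have hfun : (fun k => (i + 1) + (-((St8.eps n k : ℕ) : ℤ)
          - expVec n rneg rpos s0 s1 (St8.pairIdx n k)))
        = fun k => expVec n rneg rpos s0 s1 k
            + if ((i + 1) - ((St8.eps n k : ℕ) : ℤ)
                - expVec n rneg rpos s0 s1 (St8.pairIdx n k)
                = expVec n rneg rpos s0 s1 k + 1) then 1 else 0 := by
      funext k
      have h1 := hall k
      by_cases hck : (i + 1) - ((St8.eps n k : ℕ) : ℤ)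
          - expVec n rneg rpos s0 s1 (St8.pairIdx n k) = expVec n rneg rpos s0 s1 k + 1
      · rw [if_pos hck]
        omega
      · rw [if_neg hck]
        omega
    rw [hfun, St8.relIdx_coordLat p n (expVec n rneg rpos s0 s1)
      (fun k => (i + 1) - ((St8.eps n k : ℕ) : ℤ)
        - expVec n rneg rpos s0 s1 (St8.pairIdx n k) = expVec n rneg rpos s0 s1 k + 1)]
    rw [St8.count_eq n rneg rpos s0 s1 hn i hni hcond.2.1 hcond.2.2
      (fun k => (i + 1) - ((St8.eps n k : ℕ) : ℤ)
        - expVec n rneg rpos s0 s1 (St8.pairIdx n k) = expVec n rneg rpos s0 s1 k + 1)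
      (fun k => Iff.rfl)]
end
end
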